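/- arXiv:2105.01000 — 3 statements merged into one kernel-verified Lean document; each statement's English description precedes it below -/
import Mathlib

section
/- Let A and B be connected cochain DG algebras over a field k and let E be a DG (A ⊗ B)-module such that Hom_{A⊗B}(M, E) is acyclic for every acyclic DG (A ⊗ B)-module M. Then for any left DG B-module Q, the Hom-complex Hom_B(Q, E), regarded as a left DG A-module via (a·f)(y) = (a⊗1) f(y), satisfies: Hom_A(N, Hom_B(Q, E)) is acyclic for every acyclic left DG A-module N. -/
/-!
Common infrastructure: connected cochain DG algebras over a field `k`,
(left/right/bi-) DG modules, Hom-complexes, torsion functors, etc.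
-/

universe u v w

open DirectSum TensorProduct

/-- A connected cochain DG algebra over a field `k`:
a ℤ-graded unital associative `k`-algebra `A = ⊕ᵢ Aⁱ` with `Aⁱ = 0` for `i < 0`,
`A⁰ = k·1`, equipped with a degree `+1` differential `d` with `d ∘ d = 0`
satisfying the graded Leibniz rule. -/
structure ConnCDGA (k : Type u) [Field k] (A : Type v) [Ring A] [Algebra k A] where
  gr : ℤ → Submodule k A
  decomp : DirectSum.Decomposition gr
  one_mem : (1 : A) ∈ gr 0
  mul_mem : ∀ {i j : ℤ} {a b : A}, a ∈ gr i → b ∈ gr j → a * b ∈ gr (i + j)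
  connected : ∀ i : ℤ, i < 0 → gr i = ⊥
  deg_zero : gr 0 = Submodule.span k {(1 : A)}
  d : A →ₗ[k] A
  d_mem : ∀ {i : ℤ} {a : A}, a ∈ gr i → d a ∈ gr (i + 1)
  d_sq : ∀ a : A, d (d a) = 0
  leibniz : ∀ {i j : ℤ} {a b : A}, a ∈ gr i → b ∈ gr j →
    d (a * b) = d a * b + ((-1 : k) ^ i) • (a * d b)

variable {k : Type u} [Field k] {A : Type v} [Ring A] [Algebra k A]
variable {B : Type v} [Ring B] [Algebra k B]

/-- A DG algebra automorphism of a connected cochain DG algebra: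
a degree-preserving `k`-algebra automorphism commuting with the differential. -/
structure IsDGAut (𝒜 : ConnCDGA k A) (φ : A → A) : Prop where
  bij : Function.Bijective φ
  map_add : ∀ x y : A, φ (x + y) = φ x + φ y
  map_mul : ∀ x y : A, φ (x * y) = φ x * φ y
  map_one : φ 1 = 1
  map_ksmul : ∀ (c : k) (x : A), φ (c • x) = c • φ x
  map_gr : ∀ {i : ℤ} {x : A}, x ∈ 𝒜.gr i → φ x ∈ 𝒜.gr i
  map_d : ∀ x : A, φ (𝒜.d x) = 𝒜.d (φ x)

/-- A left DG module over a connected cochain DG algebra `𝒜`. -/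
structure DGMod (𝒜 : ConnCDGA k A) (M : Type w) [AddCommGroup M] [Module k M] where
  smul : A → M → M
  smul_add : ∀ (a : A) (m n : M), smul a (m + n) = smul a m + smul a n
  add_smul : ∀ (a b : A) (m : M), smul (a + b) m = smul a m + smul b m
  mul_smul : ∀ (a b : A) (m : M), smul (a * b) m = smul a (smul b m)
  one_smul : ∀ m : M, smul 1 m = m
  ksmul_left : ∀ (c : k) (a : A) (m : M), smul (c • a) m = c • smul a m
  ksmul_right : ∀ (c : k) (a : A) (m : M), smul a (c • m) = c • smul a m
  gr : ℤ → Submodule k M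
  decomp : DirectSum.Decomposition gr
  smul_mem : ∀ {i j : ℤ} {a : A} {m : M}, a ∈ 𝒜.gr i → m ∈ gr j → smul a m ∈ gr (i + j)
  d : M →ₗ[k] M
  d_mem : ∀ {i : ℤ} {m : M}, m ∈ gr i → d m ∈ gr (i + 1)
  d_sq : ∀ m : M, d (d m) = 0
  leibniz : ∀ {i : ℤ} {a : A} (m : M), a ∈ 𝒜.gr i →
    d (smul a m) = smul (𝒜.d a) m + ((-1 : k) ^ i) • smul a (d m)

/-- A right DG module over a connected cochain DG algebra `𝒜`
(equivalently, a left DG module over the opposite DG algebra `𝒜ᵒᵖ`). -/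
structure DGRMod (𝒜 : ConnCDGA k A) (M : Type w) [AddCommGroup M] [Module k M] where
  rsmul : M → A → M
  rsmul_add : ∀ (a : A) (m n : M), rsmul (m + n) a = rsmul m a + rsmul n a
  add_rsmul : ∀ (a b : A) (m : M), rsmul m (a + b) = rsmul m a + rsmul m b
  mul_rsmul : ∀ (a b : A) (m : M), rsmul m (a * b) = rsmul (rsmul m a) b
  one_rsmul : ∀ m : M, rsmul m 1 = m
  krsmul_left : ∀ (c : k) (a : A) (m : M), rsmul (c • m) a = c • rsmul m a
  krsmul_right : ∀ (c : k) (a : A) (m : M), rsmul m (c • a) = c • rsmul m a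
  gr : ℤ → Submodule k M
  decomp : DirectSum.Decomposition gr
  rsmul_mem : ∀ {i j : ℤ} {m : M} {a : A}, m ∈ gr i → a ∈ 𝒜.gr j → rsmul m a ∈ gr (i + j)
  d : M →ₗ[k] M
  d_mem : ∀ {i : ℤ} {m : M}, m ∈ gr i → d m ∈ gr (i + 1)
  d_sq : ∀ m : M, d (d m) = 0
  leibniz : ∀ {i : ℤ} {m : M} (a : A), m ∈ gr i →
    d (rsmul m a) = rsmul (d m) a + ((-1 : k) ^ i) • rsmul m (𝒜.d a)

/-- A DG bimodule over a connected cochain DG algebra `𝒜`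
(equivalently, a DG module over the enveloping DG algebra `𝒜ᵉ = 𝒜 ⊗ 𝒜ᵒᵖ`). -/
structure DGBimod (𝒜 : ConnCDGA k A) (M : Type w) [AddCommGroup M] [Module k M]
    extends DGMod 𝒜 M where
  rsmul : M → A → M
  rsmul_add : ∀ (a : A) (m n : M), rsmul (m + n) a = rsmul m a + rsmul n a
  add_rsmul : ∀ (a b : A) (m : M), rsmul m (a + b) = rsmul m a + rsmul m b
  mul_rsmul : ∀ (a b : A) (m : M), rsmul m (a * b) = rsmul (rsmul m a) b
  one_rsmul : ∀ m : M, rsmul m 1 = m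
  krsmul_left : ∀ (c : k) (a : A) (m : M), rsmul (c • m) a = c • rsmul m a
  krsmul_right : ∀ (c : k) (a : A) (m : M), rsmul m (c • a) = c • rsmul m a
  rsmul_mem : ∀ {i j : ℤ} {m : M} {a : A}, m ∈ gr i → a ∈ 𝒜.gr j → rsmul m a ∈ gr (i + j)
  rleibniz : ∀ {i : ℤ} {m : M} (a : A), m ∈ gr i →
    d (rsmul m a) = rsmul (d m) a + ((-1 : k) ^ i) • rsmul m (𝒜.d a)
  smul_rsmul_assoc : ∀ (a : A) (m : M) (b : A), rsmul (smul a m) b = smul a (rsmul m b)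

/-- The underlying right DG module of a DG bimodule. -/
def DGBimod.toDGRMod {𝒜 : ConnCDGA k A} {M : Type w} [AddCommGroup M] [Module k M]
    (ℳ : DGBimod 𝒜 M) : DGRMod 𝒜 M where
  rsmul := ℳ.rsmul
  rsmul_add := ℳ.rsmul_add
  add_rsmul := ℳ.add_rsmul
  mul_rsmul := ℳ.mul_rsmul
  one_rsmul := ℳ.one_rsmul
  krsmul_left := ℳ.krsmul_left
  krsmul_right := ℳ.krsmul_right
  gr := ℳ.gr
  decomp := ℳ.decomp
  rsmul_mem := ℳ.rsmul_mem
  d := ℳ.d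
  d_mem := ℳ.d_mem
  d_sq := ℳ.d_sq
  leibniz := ℳ.rleibniz

/-- The torsion DG submodule `Γ_𝔪(M) = {m ∈ M ∣ A^{≥n} m = 0 for some n ≥ 1}`. -/
def DGMod.torsion {𝒜 : ConnCDGA k A} {M : Type w} [AddCommGroup M] [Module k M]
    (ℳ : DGMod 𝒜 M) : Set M :=
  {m : M | ∃ n : ℤ, 1 ≤ n ∧ ∀ a ∈ (⨆ (i : ℤ) (_ : n ≤ i), 𝒜.gr i), ℳ.smul a m = 0}

/-- `M` is acyclic, i.e. `H(M) = 0`. -/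
def DGMod.IsAcyclic {𝒜 : ConnCDGA k A} {M : Type w} [AddCommGroup M] [Module k M]
    (ℳ : DGMod 𝒜 M) : Prop :=
  ∀ m : M, ℳ.d m = 0 → ∃ x : M, ℳ.d x = m

/-- `M` is acyclic, i.e. `H(M) = 0` (right module version). -/
def DGRMod.IsAcyclic {𝒜 : ConnCDGA k A} {M : Type w} [AddCommGroup M] [Module k M]
    (ℳ : DGRMod 𝒜 M) : Prop :=
  ∀ m : M, ℳ.d m = 0 → ∃ x : M, ℳ.d x = m

/-- A morphism of left DG modules: a degree-0 `A`-linear chain map. -/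
structure DGHom {𝒜 : ConnCDGA k A} {M : Type w} {N : Type w}
    [AddCommGroup M] [Module k M] [AddCommGroup N] [Module k N]
    (ℳ : DGMod 𝒜 M) (𝒩 : DGMod 𝒜 N) where
  toFun : M → N
  map_add : ∀ x y : M, toFun (x + y) = toFun x + toFun y
  map_ksmul : ∀ (c : k) (x : M), toFun (c • x) = c • toFun x
  map_smul : ∀ (a : A) (x : M), toFun (ℳ.smul a x) = 𝒩.smul a (toFun x)
  map_gr : ∀ {i : ℤ} {x : M}, x ∈ ℳ.gr i → toFun x ∈ 𝒩.gr i
  map_d : ∀ x : M, toFun (ℳ.d x) = 𝒩.d (toFun x)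

/-- A homogeneous degree-`i` element of the Hom-complex `Hom_A(M, N)` of left DG modules:
an `A`-linear map of degree `i` (with Koszul sign rule `f(am) = (-1)^{i|a|} a f(m)`). -/
structure HomDeg {𝒜 : ConnCDGA k A} {M : Type w} {N : Type w}
    [AddCommGroup M] [Module k M] [AddCommGroup N] [Module k N]
    (ℳ : DGMod 𝒜 M) (𝒩 : DGMod 𝒜 N) (i : ℤ) where
  toFun : M → N
  map_add : ∀ x y : M, toFun (x + y) = toFun x + toFun y
  map_ksmul : ∀ (c : k) (x : M), toFun (c • x) = c • toFun x
  map_gr : ∀ {j : ℤ} {x : M}, x ∈ ℳ.gr j → toFun x ∈ 𝒩.gr (j + i)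
  map_smul : ∀ {j : ℤ} {a : A} (x : M), a ∈ 𝒜.gr j →
    toFun (ℳ.smul a x) = ((-1 : k) ^ (i * j)) • 𝒩.smul a (toFun x)

/-- A homogeneous degree-`i` element of the Hom-complex `Hom_{Aᵒᵖ}(M, N)` of right DG modules. -/
structure RHomDeg {𝒜 : ConnCDGA k A} {M : Type w} {N : Type w}
    [AddCommGroup M] [Module k M] [AddCommGroup N] [Module k N]
    (ℳ : DGRMod 𝒜 M) (𝒩 : DGRMod 𝒜 N) (i : ℤ) where
  toFun : M → N
  map_add : ∀ x y : M, toFun (x + y) = toFun x + toFun y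
  map_ksmul : ∀ (c : k) (x : M), toFun (c • x) = c • toFun x
  map_gr : ∀ {j : ℤ} {x : M}, x ∈ ℳ.gr j → toFun x ∈ 𝒩.gr (j + i)
  map_rsmul : ∀ (x : M) (a : A), toFun (ℳ.rsmul x a) = 𝒩.rsmul (toFun x) a

/-- A homogeneous degree-`i` element of the Hom-complex `Hom_{Aᵉ}(M, N)` of DG bimodules. -/
structure BiHomDeg {𝒜 : ConnCDGA k A} {M : Type w} {N : Type w}
    [AddCommGroup M] [Module k M] [AddCommGroup N] [Module k N]
    (ℳ : DGBimod 𝒜 M) (𝒩 : DGBimod 𝒜 N) (i : ℤ)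
    extends HomDeg ℳ.toDGMod 𝒩.toDGMod i where
  map_rsmul : ∀ (x : M) (a : A), toFun (ℳ.rsmul x a) = 𝒩.rsmul (toFun x) a

/-- The Hom-complex `Hom_A(M,N)` of left DG modules is acyclic:
every homogeneous cocycle is a coboundary (differential `∂f = ∂_N ∘ f - (-1)^{|f|} f ∘ ∂_M`). -/
def HomAcyclic {𝒜 : ConnCDGA k A} {M : Type w} {N : Type w}
    [AddCommGroup M] [Module k M] [AddCommGroup N] [Module k N]
    (ℳ : DGMod 𝒜 M) (𝒩 : DGMod 𝒜 N) : Prop :=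
  ∀ (i : ℤ) (f : HomDeg ℳ 𝒩 i),
    (∀ x : M, 𝒩.d (f.toFun x) = ((-1 : k) ^ i) • f.toFun (ℳ.d x)) →
    ∃ g : HomDeg ℳ 𝒩 (i - 1),
      ∀ x : M, f.toFun x = 𝒩.d (g.toFun x) - ((-1 : k) ^ (i - 1)) • g.toFun (ℳ.d x)

/-- The Hom-complex of right DG modules is acyclic. -/
def RHomAcyclic {𝒜 : ConnCDGA k A} {M : Type w} {N : Type w}
    [AddCommGroup M] [Module k M] [AddCommGroup N] [Module k N]
    (ℳ : DGRMod 𝒜 M) (𝒩 : DGRMod 𝒜 N) : Prop :=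
  ∀ (i : ℤ) (f : RHomDeg ℳ 𝒩 i),
    (∀ x : M, 𝒩.d (f.toFun x) = ((-1 : k) ^ i) • f.toFun (ℳ.d x)) →
    ∃ g : RHomDeg ℳ 𝒩 (i - 1),
      ∀ x : M, f.toFun x = 𝒩.d (g.toFun x) - ((-1 : k) ^ (i - 1)) • g.toFun (ℳ.d x)

/-- The Hom-complex of DG bimodules is acyclic. -/
def BiHomAcyclic {𝒜 : ConnCDGA k A} {M : Type w} {N : Type w}
    [AddCommGroup M] [Module k M] [AddCommGroup N] [Module k N]
    (ℳ : DGBimod 𝒜 M) (𝒩 : DGBimod 𝒜 N) : Prop :=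
  ∀ (i : ℤ) (f : BiHomDeg ℳ 𝒩 i),
    (∀ x : M, 𝒩.d (f.toFun x) = ((-1 : k) ^ i) • f.toFun (ℳ.d x)) →
    ∃ g : BiHomDeg ℳ 𝒩 (i - 1),
      ∀ x : M, f.toFun x = 𝒩.d (g.toFun x) - ((-1 : k) ^ (i - 1)) • g.toFun (ℳ.d x)

/-- A DG module over the tensor product DG algebra `𝒜 ⊗ ℬ`, modelled as a complex with
commuting (up to Koszul sign) left `𝒜`- and left `ℬ`- DG module structures. -/
structure DGBiActMod (𝒜 : ConnCDGA k A) (ℬ : ConnCDGA k B) (M : Type w)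
    [AddCommGroup M] [Module k M] extends DGMod 𝒜 M where
  bsmul : B → M → M
  bsmul_add : ∀ (b : B) (m n : M), bsmul b (m + n) = bsmul b m + bsmul b n
  add_bsmul : ∀ (b c : B) (m : M), bsmul (b + c) m = bsmul b m + bsmul c m
  mul_bsmul : ∀ (b c : B) (m : M), bsmul (b * c) m = bsmul b (bsmul c m)
  one_bsmul : ∀ m : M, bsmul 1 m = m
  kbsmul_left : ∀ (c : k) (b : B) (m : M), bsmul (c • b) m = c • bsmul b m
  kbsmul_right : ∀ (c : k) (b : B) (m : M), bsmul b (c • m) = c • bsmul b m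
  bsmul_mem : ∀ {i j : ℤ} {b : B} {m : M}, b ∈ ℬ.gr i → m ∈ gr j → bsmul b m ∈ gr (i + j)
  bleibniz : ∀ {i : ℤ} {b : B} (m : M), b ∈ ℬ.gr i →
    d (bsmul b m) = bsmul (ℬ.d b) m + ((-1 : k) ^ i) • bsmul b (d m)
  ab_compat : ∀ {i j : ℤ} {a : A} {b : B} (m : M), a ∈ 𝒜.gr i → b ∈ ℬ.gr j →
    smul a (bsmul b m) = ((-1 : k) ^ (i * j)) • bsmul b (smul a m)

/-- A homogeneous degree-`i` element of the Hom-complex `Hom_{A⊗B}(M, N)`. -/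
structure ABHomDeg {𝒜 : ConnCDGA k A} {ℬ : ConnCDGA k B} {M : Type w} {N : Type w}
    [AddCommGroup M] [Module k M] [AddCommGroup N] [Module k N]
    (ℳ : DGBiActMod 𝒜 ℬ M) (𝒩 : DGBiActMod 𝒜 ℬ N) (i : ℤ)
    extends HomDeg ℳ.toDGMod 𝒩.toDGMod i where
  map_bsmul : ∀ {j : ℤ} {b : B} (x : M), b ∈ ℬ.gr j →
    toFun (ℳ.bsmul b x) = ((-1 : k) ^ (i * j)) • 𝒩.bsmul b (toFun x)

/-- The Hom-complex `Hom_{A⊗B}(M, N)` is acyclic. -/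
def ABHomAcyclic {𝒜 : ConnCDGA k A} {ℬ : ConnCDGA k B} {M : Type w} {N : Type w}
    [AddCommGroup M] [Module k M] [AddCommGroup N] [Module k N]
    (ℳ : DGBiActMod 𝒜 ℬ M) (𝒩 : DGBiActMod 𝒜 ℬ N) : Prop :=
  ∀ (i : ℤ) (f : ABHomDeg ℳ 𝒩 i),
    (∀ x : M, 𝒩.d (f.toFun x) = ((-1 : k) ^ i) • f.toFun (ℳ.d x)) →
    ∃ g : ABHomDeg ℳ 𝒩 (i - 1),
      ∀ x : M, f.toFun x = 𝒩.d (g.toFun x) - ((-1 : k) ^ (i - 1)) • g.toFun (ℳ.d x)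

/-- A homogeneous degree-`i` element of the Hom-complex `Hom_A(P, Hom_B(Q, E))`,
where `E` is a DG `A⊗B`-module, encoded as a two-variable function. -/
structure HomHomDeg {𝒜 : ConnCDGA k A} {ℬ : ConnCDGA k B}
    {P : Type w} {Q : Type w} {E : Type w}
    [AddCommGroup P] [Module k P] [AddCommGroup Q] [Module k Q]
    [AddCommGroup E] [Module k E]
    (MP : DGMod 𝒜 P) (MQ : DGMod ℬ Q) (ME : DGBiActMod 𝒜 ℬ E) (i : ℤ) where
  toFun : P → Q → E
  map_add₁ : ∀ (x y : P) (q : Q), toFun (x + y) q = toFun x q + toFun y q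
  map_ksmul₁ : ∀ (c : k) (x : P) (q : Q), toFun (c • x) q = c • toFun x q
  map_add₂ : ∀ (x : P) (q r : Q), toFun x (q + r) = toFun x q + toFun x r
  map_ksmul₂ : ∀ (c : k) (x : P) (q : Q), toFun x (c • q) = c • toFun x q
  map_gr : ∀ {j l : ℤ} {x : P} {q : Q}, x ∈ MP.gr j → q ∈ MQ.gr l →
    toFun x q ∈ ME.gr (i + j + l)
  map_bsmul : ∀ {j m : ℤ} {x : P} {b : B} (q : Q), x ∈ MP.gr j → b ∈ ℬ.gr m →
    toFun x (MQ.smul b q) = ((-1 : k) ^ ((i + j) * m)) • ME.bsmul b (toFun x q)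
  map_asmul : ∀ {m : ℤ} {a : A} (x : P) (q : Q), a ∈ 𝒜.gr m →
    toFun (MP.smul a x) q = ((-1 : k) ^ (i * m)) • ME.smul a (toFun x q)

/-- A DG pairing `θ : X × Y → A` between a DG `A`-bimodule `X` and a DG `A`-bimodule `Y`:
`A`-balanced, left and right `A`-linear, graded and compatible with the differentials.
Such a map induces a morphism of DG `A`-bimodules `X ⊗_A Y → A`. -/
structure IsDGPairing {𝒜 : ConnCDGA k A} {X : Type w} {Y : Type w}
    [AddCommGroup X] [Module k X] [AddCommGroup Y] [Module k Y]
    (𝕏 : DGBimod 𝒜 X) (𝕐 : DGBimod 𝒜 Y) (θ : X →ₗ[k] Y →ₗ[k] A) : Prop where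
  balanced : ∀ (a : A) (x : X) (y : Y), θ (𝕏.rsmul x a) y = θ x (𝕐.smul a y)
  left_lin : ∀ (a : A) (x : X) (y : Y), θ (𝕏.smul a x) y = a * θ x y
  right_lin : ∀ (a : A) (x : X) (y : Y), θ x (𝕐.rsmul y a) = θ x y * a
  graded : ∀ {i j : ℤ} {x : X} {y : Y}, x ∈ 𝕏.gr i → y ∈ 𝕐.gr j → θ x y ∈ 𝒜.gr (i + j)
  chain : ∀ {i : ℤ} {x : X} (y : Y), x ∈ 𝕏.gr i →
    𝒜.d (θ x y) = θ (𝕏.d x) y + ((-1 : k) ^ i) • θ x (𝕐.d y)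

/-- The `k`-subspace of `X ⊗_k Y` spanned by the elements `xa ⊗ y - x ⊗ ay`;
quotienting by it yields `X ⊗_A Y`. -/
def balancedRel {𝒜 : ConnCDGA k A} {X : Type w} {Y : Type w}
    [AddCommGroup X] [Module k X] [AddCommGroup Y] [Module k Y]
    (𝕏 : DGBimod 𝒜 X) (𝕐 : DGBimod 𝒜 Y) : Submodule k (TensorProduct k X Y) :=
  Submodule.span k {z | ∃ (a : A) (x : X) (y : Y),
    z = (𝕏.rsmul x a) ⊗ₜ[k] y - x ⊗ₜ[k] (𝕐.smul a y)}

/-- `G : A → L` is an isomorphism of DG `A`-bimodules `Σⁱ A(φ) → L`, where `Σⁱ A(φ)`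
is the shift of `A` by `i` twisted on the right by the DG automorphism `φ`
(free on a generator `e = 1` in degree `-i`, right action `e·a = (-1)^{i|a|} φ(a) e`). -/
def IsShiftTwistIso {𝒜 : ConnCDGA k A} {L : Type w} [AddCommGroup L] [Module k L]
    (𝕃 : DGBimod 𝒜 L) (i : ℤ) (φ : A → A) (G : A → L) : Prop :=
  Function.Bijective G ∧
  (∀ x y : A, G (x + y) = G x + G y) ∧
  (∀ (c : k) (x : A), G (c • x) = c • G x) ∧
  (∀ (j : ℤ) (a : A), a ∈ 𝒜.gr j ↔ G a ∈ 𝕃.gr (j - i)) ∧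
  (∀ a : A, G (𝒜.d a) = 𝕃.d (G a)) ∧
  (∀ a x : A, G (a * x) = 𝕃.smul a (G x)) ∧
  (∀ (j : ℤ) (x a : A), a ∈ 𝒜.gr j →
    𝕃.rsmul (G x) a = ((-1 : k) ^ (i * j)) • G (x * φ a))

/-- The `k`-subspace of `X ⊗_k F` (X a right DG module, F a left DG module) spanned by
the elements `xa ⊗ u - x ⊗ au`; quotienting by it yields `X ⊗_A F`. -/
def balRL {𝒜 : ConnCDGA k A} {X : Type w} {F : Type w}
    [AddCommGroup X] [Module k X] [AddCommGroup F] [Module k F]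
    (𝒳 : DGRMod 𝒜 X) (ℱ : DGMod 𝒜 F) : Submodule k (TensorProduct k X F) :=
  Submodule.span k {z | ∃ (a : A) (x : X) (u : F),
    z = (𝒳.rsmul x a) ⊗ₜ[k] u - x ⊗ₜ[k] (ℱ.smul a u)}

/-- The tensor product `X ⊗_A F` of a right DG module with a left DG module. -/
abbrev TensRL {𝒜 : ConnCDGA k A} {X : Type w} {F : Type w}
    [AddCommGroup X] [Module k X] [AddCommGroup F] [Module k F]
    (𝒳 : DGRMod 𝒜 X) (ℱ : DGMod 𝒜 F) :=
  TensorProduct k X F ⧸ balRL 𝒳 ℱ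

/-- The degree-`m` graded piece of `X ⊗_A F`. -/
def tgrRL {𝒜 : ConnCDGA k A} {X : Type w} {F : Type w}
    [AddCommGroup X] [Module k X] [AddCommGroup F] [Module k F]
    (𝒳 : DGRMod 𝒜 X) (ℱ : DGMod 𝒜 F) (m : ℤ) : Submodule k (TensRL 𝒳 ℱ) :=
  Submodule.span k {t | ∃ (p q : ℤ) (x : X) (u : F), x ∈ 𝒳.gr p ∧ u ∈ ℱ.gr q ∧
    p + q = m ∧ t = Submodule.Quotient.mk (x ⊗ₜ[k] u)}

/-- A homogeneous degree-`n` element of the Matlis dual complex `(X ⊗_A F)'`: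
a `k`-linear functional on `X ⊗_A F` supported on the graded piece of degree `-n`. -/
structure DualDegRL {𝒜 : ConnCDGA k A} {X : Type w} {F : Type w}
    [AddCommGroup X] [Module k X] [AddCommGroup F] [Module k F]
    (𝒳 : DGRMod 𝒜 X) (ℱ : DGMod 𝒜 F) (n : ℤ) where
  toFun : TensRL 𝒳 ℱ → k
  map_add : ∀ s t : TensRL 𝒳 ℱ, toFun (s + t) = toFun s + toFun t
  map_ksmul : ∀ (c : k) (t : TensRL 𝒳 ℱ), toFun (c • t) = c * toFun t
  supp : ∀ (m : ℤ), m ≠ -n → ∀ t ∈ tgrRL 𝒳 ℱ m, toFun t = 0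

/-- A homogeneous degree-`n` element of the Hom-complex `Hom_A(F, X')`, where `X'`
is the Matlis dual of the right DG module `X`, viewed as a left DG module via
`(a·f)(x) = (-1)^{|a||f|} f(xa)`; encoded as a two-variable function `F → X → k`. -/
structure HomToDualDeg {𝒜 : ConnCDGA k A} {X : Type w} {F : Type w}
    [AddCommGroup X] [Module k X] [AddCommGroup F] [Module k F]
    (𝒳 : DGRMod 𝒜 X) (ℱ : DGMod 𝒜 F) (n : ℤ) where
  toFun : F → X → k
  map_add₁ : ∀ (u v : F) (x : X), toFun (u + v) x = toFun u x + toFun v x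
  map_ksmul₁ : ∀ (c : k) (u : F) (x : X), toFun (c • u) x = c * toFun u x
  map_add₂ : ∀ (u : F) (x y : X), toFun u (x + y) = toFun u x + toFun u y
  map_ksmul₂ : ∀ (c : k) (u : F) (x : X), toFun u (c • x) = c * toFun u x
  supp : ∀ {q j : ℤ} {u : F} {x : X}, u ∈ ℱ.gr q → x ∈ 𝒳.gr j → j ≠ -(n + q) →
    toFun u x = 0
  map_smul : ∀ {m q : ℤ} {a : A} {u : F} (x : X), a ∈ 𝒜.gr m → u ∈ ℱ.gr q →
    toFun (ℱ.smul a u) x = ((-1 : k) ^ (m * q)) * toFun u (𝒳.rsmul x a)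

section S5Aux

variable {k : Type u} [Field k]

lemma S5.negone_ne : ((-1 : k)) ≠ 0 := by
  simp

lemma S5.eadd (m n : ℤ) : ((-1:k)) ^ (m + n) = (-1:k) ^ m * (-1:k) ^ n :=
  zpow_add₀ S5.negone_ne m n

lemma S5.esq (m : ℤ) : ((-1:k)) ^ m * (-1:k) ^ m = 1 := by
  rw [← S5.eadd]
  have : m + m = 2 * m := by ring
  rw [this, zpow_mul]
  norm_num

lemma S5.emul_cancel (m n : ℤ) : ((-1:k)) ^ m * ((-1:k)) ^ m * ((-1:k)) ^ n = ((-1:k)) ^ n := by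
  rw [S5.esq, one_mul]

variable {A : Type v} [Ring A] [Algebra k A]
variable {N : Type w} [AddCommGroup N] [Module k N]

/-- Build a linear operator on `N` from a family of linear maps on the graded pieces. -/
noncomputable def S5.gop (𝒜 : ConnCDGA k A) (𝒩 : DGMod 𝒜 N)
    (F : ∀ j : ℤ, (𝒩.gr j) →ₗ[k] N) : N →ₗ[k] N :=
  letI := 𝒩.decomp
  (DirectSum.toModule k ℤ N F) ∘ₗ (DirectSum.decomposeLinearEquiv 𝒩.gr).toLinearMap

lemma S5.gop_of_mem (𝒜 : ConnCDGA k A) (𝒩 : DGMod 𝒜 N)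
    (F : ∀ j : ℤ, (𝒩.gr j) →ₗ[k] N) {j : ℤ} {x : N} (hx : x ∈ 𝒩.gr j) :
    S5.gop 𝒜 𝒩 F x = F j ⟨x, hx⟩ := by
  letI := 𝒩.decomp
  have h1 : DirectSum.decompose 𝒩.gr x = DirectSum.lof k ℤ (fun i => 𝒩.gr i) j ⟨x, hx⟩ := by
    rw [DirectSum.decompose_of_mem 𝒩.gr hx, DirectSum.lof_eq_of]
  simp only [S5.gop, LinearMap.comp_apply, LinearEquiv.coe_coe,
    DirectSum.decomposeLinearEquiv_apply, h1, DirectSum.toModule_lof]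

/-- The sign operator `x ↦ (-1)^{m·|x|} x`. -/
noncomputable def S5.sgn (𝒜 : ConnCDGA k A) (𝒩 : DGMod 𝒜 N) (m : ℤ) : N →ₗ[k] N :=
  S5.gop 𝒜 𝒩 (fun j => ((-1:k) ^ (m * j)) • (𝒩.gr j).subtype)

lemma S5.sgn_of_mem (𝒜 : ConnCDGA k A) (𝒩 : DGMod 𝒜 N) (m : ℤ) {j : ℤ} {x : N}
    (hx : x ∈ 𝒩.gr j) : S5.sgn 𝒜 𝒩 m x = ((-1:k) ^ (m * j)) • x := by
  rw [S5.sgn, S5.gop_of_mem 𝒜 𝒩 _ hx]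
  rfl

end S5Aux

namespace S5
section Homotopy

variable {k : Type u} [Field k] {A : Type v} [Ring A] [Algebra k A]
variable {N : Type w} [AddCommGroup N] [Module k N]
variable (𝒜 : ConnCDGA k A) (𝒩 : DGMod 𝒜 N)

/-- The differential restricted to a graded piece. -/
noncomputable def dres (j : ℤ) : (𝒩.gr j) →ₗ[k] N := 𝒩.d ∘ₗ (𝒩.gr j).subtype

/-- Cycles in degree `j`. -/
noncomputable def KK (j : ℤ) : Submodule k (𝒩.gr j) := LinearMap.ker (dres 𝒜 𝒩 j)

/-- A chosen complement of the cycles. -/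
noncomputable def CC (j : ℤ) : Submodule k (𝒩.gr j) :=
  (KK 𝒜 𝒩 j).exists_isCompl.choose

lemma hKC (j : ℤ) : IsCompl (KK 𝒜 𝒩 j) (CC 𝒜 𝒩 j) :=
  (KK 𝒜 𝒩 j).exists_isCompl.choose_spec

lemma mem_KK_iff {j : ℤ} (x : (𝒩.gr j)) : x ∈ KK 𝒜 𝒩 j ↔ 𝒩.d (x : N) = 0 := by
  simp [KK, dres, LinearMap.mem_ker]

/-- `d` as a map from the complement of cycles to the next cycles. -/
noncomputable def FF (j : ℤ) : (CC 𝒜 𝒩 j) →ₗ[k] (KK 𝒜 𝒩 (j + 1)) where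
  toFun c := ⟨⟨𝒩.d ((c : (𝒩.gr j)) : N), 𝒩.d_mem (c : (𝒩.gr j)).2⟩,
    (mem_KK_iff 𝒜 𝒩 _).2 (𝒩.d_sq _)⟩
  map_add' c c' := by apply Subtype.ext; apply Subtype.ext; simp
  map_smul' t c := by apply Subtype.ext; apply Subtype.ext; simp

lemma FF_val {j : ℤ} (c : (CC 𝒜 𝒩 j)) :
    ((FF 𝒜 𝒩 j c : (𝒩.gr (j + 1))) : N) = 𝒩.d ((c : (𝒩.gr j)) : N) := rfl

/-- Degreewise exactness from global acyclicity. -/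
lemma deg_exact (hac : 𝒩.IsAcyclic) {j : ℤ} {z : N} (hz : z ∈ 𝒩.gr (j + 1))
    (hdz : 𝒩.d z = 0) : ∃ x ∈ 𝒩.gr j, 𝒩.d x = z := by
  obtain ⟨y, hy⟩ := hac z hdz
  letI := 𝒩.decomp
  refine ⟨(DirectSum.decompose 𝒩.gr y j : N), (DirectSum.decompose 𝒩.gr y j).2, ?_⟩
  have key : ∀ w : N, 𝒩.d ((DirectSum.decompose 𝒩.gr w j : N))
      = ((DirectSum.decompose 𝒩.gr (𝒩.d w) (j + 1) : N)) := by
    intro w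
    refine DirectSum.Decomposition.inductionOn 𝒩.gr
      (motive := fun w => 𝒩.d ((DirectSum.decompose 𝒩.gr w j : N))
        = ((DirectSum.decompose 𝒩.gr (𝒩.d w) (j + 1) : N))) ?_ ?_ ?_ w
    · simp
    · intro m x
      by_cases h : m = j
      · subst h
        rw [DirectSum.decompose_of_mem_same 𝒩.gr x.2,
          DirectSum.decompose_of_mem_same 𝒩.gr (𝒩.d_mem x.2)]
      · rw [DirectSum.decompose_of_mem_ne 𝒩.gr x.2 h,
          DirectSum.decompose_of_mem_ne 𝒩.gr (𝒩.d_mem x.2) (fun e => h (by omega))]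
        simp
    · intro a b ha hb
      have hda : 𝒩.d (a + b) = 𝒩.d a + 𝒩.d b := map_add _ _ _
      rw [hda, DirectSum.decompose_add, DirectSum.decompose_add, DirectSum.add_apply,
        DirectSum.add_apply, Submodule.coe_add, Submodule.coe_add, map_add, ha, hb]
  rw [key y, hy, DirectSum.decompose_of_mem_same 𝒩.gr hz]

lemma FF_bij (hac : 𝒩.IsAcyclic) (j : ℤ) : Function.Bijective (FF 𝒜 𝒩 j) := by
  constructor
  · intro c c' h
    have hv : 𝒩.d ((c : (𝒩.gr j)) : N) = 𝒩.d ((c' : (𝒩.gr j)) : N) := by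
      have := congrArg (fun z : (KK 𝒜 𝒩 (j+1)) => ((z : (𝒩.gr (j+1))) : N)) h
      simpa [FF_val] using this
    have hmem : ((c : (𝒩.gr j)) - (c' : (𝒩.gr j))) ∈ KK 𝒜 𝒩 j := by
      rw [mem_KK_iff]
      simp [map_sub, hv]
    have hmem' : ((c : (𝒩.gr j)) - (c' : (𝒩.gr j))) ∈ CC 𝒜 𝒩 j :=
      sub_mem c.2 c'.2
    have hboth : ((c : (𝒩.gr j)) - (c' : (𝒩.gr j))) ∈ KK 𝒜 𝒩 j ⊓ CC 𝒜 𝒩 j :=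
      Submodule.mem_inf.mpr ⟨hmem, hmem'⟩
    rw [(hKC 𝒜 𝒩 j).inf_eq_bot] at hboth
    have : ((c : (𝒩.gr j)) - (c' : (𝒩.gr j))) = 0 := (Submodule.mem_bot _).1 hboth
    exact Subtype.ext (by rwa [sub_eq_zero] at this)
  · intro z
    obtain ⟨x, hx, hdx⟩ := deg_exact 𝒜 𝒩 hac ((z : (𝒩.gr (j+1))).2)
      (((mem_KK_iff 𝒜 𝒩 _).1 z.2))
    set X : (𝒩.gr j) := ⟨x, hx⟩
    refine ⟨(CC 𝒜 𝒩 j).projectionOnto (KK 𝒜 𝒩 j) (hKC 𝒜 𝒩 j).symm X, ?_⟩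
    apply Subtype.ext; apply Subtype.ext
    rw [FF_val]
    have hsplit := Submodule.projection_add_projection_eq_self (hKC 𝒜 𝒩 j) X
    rw [← Submodule.coe_projectionOnto_apply, ← Submodule.coe_projectionOnto_apply] at hsplit
    have : 𝒩.d (X : N) =
        𝒩.d (((KK 𝒜 𝒩 j).projectionOnto (CC 𝒜 𝒩 j) (hKC 𝒜 𝒩 j) X : (𝒩.gr j)) : N)
        + 𝒩.d (((CC 𝒜 𝒩 j).projectionOnto (KK 𝒜 𝒩 j) (hKC 𝒜 𝒩 j).symm X : (𝒩.gr j)) : N) := by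
      conv_lhs => rw [← hsplit]
      push_cast
      rw [map_add]
    have hK0 : 𝒩.d (((KK 𝒜 𝒩 j).projectionOnto (CC 𝒜 𝒩 j) (hKC 𝒜 𝒩 j) X : (𝒩.gr j)) : N) = 0 :=
      (mem_KK_iff 𝒜 𝒩 _).1 ((KK 𝒜 𝒩 j).projectionOnto (CC 𝒜 𝒩 j) (hKC 𝒜 𝒩 j) X).2
    rw [hdx] at this
    rw [hK0, zero_add] at this
    exact this.symm

/-- `d` as an equivalence from the complement of cycles to the next cycles. -/
noncomputable def FE (hac : 𝒩.IsAcyclic) (j : ℤ) : (CC 𝒜 𝒩 j) ≃ₗ[k] (KK 𝒜 𝒩 (j + 1)) :=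
  LinearEquiv.ofBijective (FF 𝒜 𝒩 j) (FF_bij 𝒜 𝒩 hac j)

/-- The contracting homotopy on the degree `j+1` piece. -/
noncomputable def hfam (hac : 𝒩.IsAcyclic) (j : ℤ) : (𝒩.gr (j + 1)) →ₗ[k] N :=
  (𝒩.gr j).subtype ∘ₗ (CC 𝒜 𝒩 j).subtype ∘ₗ (FE 𝒜 𝒩 hac j).symm.toLinearMap ∘ₗ
    (KK 𝒜 𝒩 (j+1)).projectionOnto (CC 𝒜 𝒩 (j+1)) (hKC 𝒜 𝒩 (j+1))

lemma hfam_mem (hac : 𝒩.IsAcyclic) (j : ℤ) (z : (𝒩.gr (j + 1))) :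
    hfam 𝒜 𝒩 hac j z ∈ 𝒩.gr j := by
  simp only [hfam, LinearMap.comp_apply, Submodule.coe_subtype]
  exact SetLike.coe_mem _

lemma hfam_congr (hac : 𝒩.IsAcyclic) {i i' : ℤ} (e : i = i')
    (z : (𝒩.gr (i + 1))) (z' : (𝒩.gr (i' + 1))) (h : (z : N) = (z' : N)) :
    hfam 𝒜 𝒩 hac i z = hfam 𝒜 𝒩 hac i' z' := by
  subst e
  congr 1
  exact Subtype.ext h

/-- The global contracting homotopy. -/
noncomputable def ht (hac : 𝒩.IsAcyclic) : N →ₗ[k] N :=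
  S5.gop 𝒜 𝒩 (fun j => (hfam 𝒜 𝒩 hac (j - 1)) ∘ₗ
    (LinearEquiv.ofEq (𝒩.gr j) (𝒩.gr (j - 1 + 1)) (congrArg 𝒩.gr (by omega))).toLinearMap)

lemma ht_of_mem (hac : 𝒩.IsAcyclic) {j : ℤ} {x : N} (hx : x ∈ 𝒩.gr j)
    {i : ℤ} (e : i + 1 = j) (hx' : x ∈ 𝒩.gr (i + 1)) :
    ht 𝒜 𝒩 hac x = hfam 𝒜 𝒩 hac i ⟨x, hx'⟩ := by
  rw [ht, S5.gop_of_mem 𝒜 𝒩 _ hx]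
  exact hfam_congr 𝒜 𝒩 hac (by omega) _ _ (by simp)

lemma ht_mem (hac : 𝒩.IsAcyclic) {j : ℤ} {x : N} (hx : x ∈ 𝒩.gr j) :
    ht 𝒜 𝒩 hac x ∈ 𝒩.gr (j - 1) := by
  have hx' : x ∈ 𝒩.gr (j - 1 + 1) := by rw [show j - 1 + 1 = j by omega]; exact hx
  rw [ht_of_mem 𝒜 𝒩 hac hx (by omega) hx']
  exact hfam_mem 𝒜 𝒩 hac _ _

lemma core1 (hac : 𝒩.IsAcyclic) (i : ℤ) (z : (𝒩.gr (i + 1))) :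
    𝒩.d (hfam 𝒜 𝒩 hac i z) =
      (((KK 𝒜 𝒩 (i+1)).projectionOnto (CC 𝒜 𝒩 (i+1)) (hKC 𝒜 𝒩 (i+1)) z : (𝒩.gr (i+1))) : N) := by
  set y := (KK 𝒜 𝒩 (i+1)).projectionOnto (CC 𝒜 𝒩 (i+1)) (hKC 𝒜 𝒩 (i+1)) z
  have h1 : 𝒩.d (hfam 𝒜 𝒩 hac i z) = ((FF 𝒜 𝒩 i ((FE 𝒜 𝒩 hac i).symm y) : (𝒩.gr (i+1))) : N) := rfl
  have h2 : FF 𝒜 𝒩 i ((FE 𝒜 𝒩 hac i).symm y) = y := by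
    have := (FE 𝒜 𝒩 hac i).apply_symm_apply y
    rwa [show ∀ c, FE 𝒜 𝒩 hac i c = FF 𝒜 𝒩 i c from fun _ => rfl] at this
  rw [h1, h2]

lemma core2 (hac : 𝒩.IsAcyclic) (m : ℤ) (x : (𝒩.gr m)) :
    hfam 𝒜 𝒩 hac m ⟨𝒩.d (x : N), 𝒩.d_mem x.2⟩ =
      (((CC 𝒜 𝒩 m).projectionOnto (KK 𝒜 𝒩 m) (hKC 𝒜 𝒩 m).symm x : (𝒩.gr m)) : N) := by
  set z : (𝒩.gr (m + 1)) := ⟨𝒩.d (x : N), 𝒩.d_mem x.2⟩ with hz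
  set c := (CC 𝒜 𝒩 m).projectionOnto (KK 𝒜 𝒩 m) (hKC 𝒜 𝒩 m).symm x with hc
  have hzK : z ∈ KK 𝒜 𝒩 (m+1) := (mem_KK_iff 𝒜 𝒩 _).2 (𝒩.d_sq _)
  have hproj : (KK 𝒜 𝒩 (m+1)).projectionOnto (CC 𝒜 𝒩 (m+1)) (hKC 𝒜 𝒩 (m+1)) z
      = ⟨z, hzK⟩ := by
    have := Submodule.linearProjOfIsCompl_apply_left (hKC 𝒜 𝒩 (m+1)) (⟨z, hzK⟩ : KK 𝒜 𝒩 (m+1))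
    exact this
  have hFc : FF 𝒜 𝒩 m c = ⟨z, hzK⟩ := by
    apply Subtype.ext; apply Subtype.ext
    rw [FF_val]
    have hsplit := Submodule.projection_add_projection_eq_self (hKC 𝒜 𝒩 m) x
    rw [← Submodule.coe_projectionOnto_apply, ← Submodule.coe_projectionOnto_apply] at hsplit
    have hd : 𝒩.d (x : N) =
        𝒩.d (((KK 𝒜 𝒩 m).projectionOnto (CC 𝒜 𝒩 m) (hKC 𝒜 𝒩 m) x : (𝒩.gr m)) : N)
        + 𝒩.d ((c : (𝒩.gr m)) : N) := by
      conv_lhs => rw [← hsplit]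
      push_cast
      rw [map_add]
    have hK0 : 𝒩.d (((KK 𝒜 𝒩 m).projectionOnto (CC 𝒜 𝒩 m) (hKC 𝒜 𝒩 m) x : (𝒩.gr m)) : N) = 0 :=
      (mem_KK_iff 𝒜 𝒩 _).1 ((KK 𝒜 𝒩 m).projectionOnto (CC 𝒜 𝒩 m) (hKC 𝒜 𝒩 m) x).2
    rw [hK0, zero_add] at hd
    exact hd.symm
  have hsymm : (FE 𝒜 𝒩 hac m).symm ⟨z, hzK⟩ = c := by
    rw [← hFc]
    exact (FE 𝒜 𝒩 hac m).symm_apply_apply c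
  show ((((FE 𝒜 𝒩 hac m).symm ((KK 𝒜 𝒩 (m+1)).projectionOnto (CC 𝒜 𝒩 (m+1)) (hKC 𝒜 𝒩 (m+1)) z) : (CC 𝒜 𝒩 m)) : (𝒩.gr m)) : N) = _
  rw [hproj, hsymm]

/-- `d ∘ h + h ∘ d = id` on homogeneous elements. -/
lemma homotopy_id (hac : 𝒩.IsAcyclic) {j : ℤ} {x : N} (hx : x ∈ 𝒩.gr j) :
    𝒩.d (ht 𝒜 𝒩 hac x) + ht 𝒜 𝒩 hac (𝒩.d x) = x := by
  have e : j - 1 + 1 = j := by omega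
  have hx' : x ∈ 𝒩.gr (j - 1 + 1) := by rw [e]; exact hx
  set i := j - 1
  set z : (𝒩.gr (i + 1)) := ⟨x, hx'⟩ with hzdef
  rw [ht_of_mem 𝒜 𝒩 hac hx (by omega) hx']
  have hdx : 𝒩.d x ∈ 𝒩.gr (j + 1) := 𝒩.d_mem hx
  have hdx' : 𝒩.d x ∈ 𝒩.gr (i + 1 + 1) := by rw [show i + 1 + 1 = j + 1 by omega]; exact hdx
  rw [ht_of_mem 𝒜 𝒩 hac hdx (by omega) hdx']
  have h2 : hfam 𝒜 𝒩 hac (i+1) ⟨𝒩.d x, hdx'⟩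
      = (((CC 𝒜 𝒩 (i+1)).projectionOnto (KK 𝒜 𝒩 (i+1)) (hKC 𝒜 𝒩 (i+1)).symm z : (𝒩.gr (i+1))) : N) := by
    have := core2 𝒜 𝒩 hac (i+1) z
    rw [← this]
  rw [core1 𝒜 𝒩 hac i z, h2]
  have hsplit := Submodule.projection_add_projection_eq_self (hKC 𝒜 𝒩 (i+1)) z
  rw [← Submodule.coe_projectionOnto_apply, ← Submodule.coe_projectionOnto_apply] at hsplit
  have := congrArg (fun w : (𝒩.gr (i+1)) => (w : N)) hsplit
  simpa using this

end Homotopy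
end S5

namespace S5
section TensorMod
set_option synthInstance.maxHeartbeats 1000000
set_option maxHeartbeats 1600000

variable {k : Type u} [Field k] {A : Type v} [Ring A] [Algebra k A]
variable {B : Type v} [Ring B] [Algebra k B]
variable {N : Type w} [AddCommGroup N] [Module k N]
variable {Q : Type w} [AddCommGroup Q] [Module k Q]
variable (𝒜 : ConnCDGA k A) (ℬ : ConnCDGA k B) (𝒩 : DGMod 𝒜 N) (MQ : DGMod ℬ Q)

/-- Left multiplication by `a` on `N` as a `k`-linear map. -/
noncomputable def aN (a : A) : N →ₗ[k] N :=
  ⟨⟨𝒩.smul a, 𝒩.smul_add a⟩, fun c x => 𝒩.ksmul_right c a x⟩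

@[simp] lemma aN_apply (a : A) (x : N) : aN 𝒜 𝒩 a x = 𝒩.smul a x := rfl

/-- Left multiplication by `b` on `Q` as a `k`-linear map. -/
noncomputable def bQ (b : B) : Q →ₗ[k] Q :=
  ⟨⟨MQ.smul b, MQ.smul_add b⟩, fun c q => MQ.ksmul_right c b q⟩

@[simp] lemma bQ_apply (b : B) (q : Q) : bQ ℬ MQ b q = MQ.smul b q := rfl

/-- The differential on `N ⊗ Q`. -/
noncomputable def DM : TensorProduct k N Q →ₗ[k] TensorProduct k N Q :=
  TensorProduct.map 𝒩.d LinearMap.id + TensorProduct.map (S5.sgn 𝒜 𝒩 1) MQ.d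

lemma DM_tmul {j : ℤ} {x : N} (hx : x ∈ 𝒩.gr j) (q : Q) :
    DM 𝒜 ℬ 𝒩 MQ (x ⊗ₜ[k] q) = 𝒩.d x ⊗ₜ[k] q + ((-1:k) ^ j) • (x ⊗ₜ[k] MQ.d q) := by
  simp only [DM, LinearMap.add_apply, TensorProduct.map_tmul, LinearMap.id_apply,
    S5.sgn_of_mem 𝒜 𝒩 1 hx, one_mul]
  rw [TensorProduct.smul_tmul']

/-- The `B`-action operator on `N ⊗ Q` for homogeneous `b`, with Koszul sign. -/
noncomputable def ΨB (m : ℤ) : (ℬ.gr m) →ₗ[k] (TensorProduct k N Q →ₗ[k] TensorProduct k N Q) where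
  toFun b := TensorProduct.map (S5.sgn 𝒜 𝒩 m) (bQ ℬ MQ (b : B))
  map_add' b b' := by
    have h : bQ ℬ MQ (((b + b' : ℬ.gr m)) : B) = bQ ℬ MQ (b : B) + bQ ℬ MQ (b' : B) := by
      apply LinearMap.ext; intro q
      simp only [Submodule.coe_add, bQ_apply, LinearMap.add_apply]
      exact MQ.add_smul _ _ q
    show TensorProduct.map (S5.sgn 𝒜 𝒩 m) (bQ ℬ MQ ((b + b' : ℬ.gr m) : B)) =
      TensorProduct.map (S5.sgn 𝒜 𝒩 m) (bQ ℬ MQ (b : B)) +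
      TensorProduct.map (S5.sgn 𝒜 𝒩 m) (bQ ℬ MQ (b' : B))
    rw [h, TensorProduct.map_add_right]
  map_smul' c b := by
    have h : bQ ℬ MQ (((c • b : ℬ.gr m)) : B) = c • bQ ℬ MQ (b : B) := by
      apply LinearMap.ext; intro q
      simp only [Submodule.coe_smul, bQ_apply, LinearMap.smul_apply]
      exact MQ.ksmul_left c _ q
    show TensorProduct.map (S5.sgn 𝒜 𝒩 m) (bQ ℬ MQ ((c • b : ℬ.gr m) : B)) =
      c • TensorProduct.map (S5.sgn 𝒜 𝒩 m) (bQ ℬ MQ (b : B))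
    rw [h, TensorProduct.map_smul_right]

/-- The `B`-action on `N ⊗ Q`. -/
noncomputable def Φ : B →ₗ[k] (TensorProduct k N Q →ₗ[k] TensorProduct k N Q) :=
  letI := ℬ.decomp
  (DirectSum.toModule k ℤ _ (ΨB 𝒜 ℬ 𝒩 MQ)) ∘ₗ (DirectSum.decomposeLinearEquiv ℬ.gr).toLinearMap

lemma Φ_of_mem {m : ℤ} {b : B} (hb : b ∈ ℬ.gr m) :
    Φ 𝒜 ℬ 𝒩 MQ b = TensorProduct.map (S5.sgn 𝒜 𝒩 m) (bQ ℬ MQ b) := by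
  letI := ℬ.decomp
  have h1 : DirectSum.decompose ℬ.gr b = DirectSum.lof k ℤ (fun i => ℬ.gr i) m ⟨b, hb⟩ := by
    rw [DirectSum.decompose_of_mem ℬ.gr hb, DirectSum.lof_eq_of]
  simp only [Φ, LinearMap.comp_apply, LinearEquiv.coe_coe, DirectSum.decomposeLinearEquiv_apply,
    h1, DirectSum.toModule_lof]
  rfl

lemma Φ_tmul {m j : ℤ} {b : B} {x : N} (hb : b ∈ ℬ.gr m) (hx : x ∈ 𝒩.gr j) (q : Q) :
    Φ 𝒜 ℬ 𝒩 MQ b (x ⊗ₜ[k] q) = ((-1:k) ^ (m * j)) • (x ⊗ₜ[k] MQ.smul b q) := by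
  rw [Φ_of_mem 𝒜 ℬ 𝒩 MQ hb]
  simp only [TensorProduct.map_tmul, S5.sgn_of_mem 𝒜 𝒩 m hx, bQ_apply]
  rw [TensorProduct.smul_tmul']

/-- The grading on `N ⊗ Q`. -/
noncomputable def grM (m : ℤ) : Submodule k (TensorProduct k N Q) :=
  Submodule.span k {t | ∃ (j l : ℤ) (x : N) (q : Q),
    x ∈ 𝒩.gr j ∧ q ∈ MQ.gr l ∧ j + l = m ∧ t = x ⊗ₜ[k] q}

lemma tmul_mem_grM {j l m : ℤ} {x : N} {q : Q} (hx : x ∈ 𝒩.gr j) (hq : q ∈ MQ.gr l)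
    (e : j + l = m) : x ⊗ₜ[k] q ∈ grM 𝒜 ℬ 𝒩 MQ m :=
  Submodule.subset_span ⟨j, l, x, q, hx, hq, e, rfl⟩

lemma grM_induction {m : ℤ} {p : TensorProduct k N Q → Prop}
    (h0 : p 0)
    (hgen : ∀ (j l : ℤ) (x : N) (q : Q), x ∈ 𝒩.gr j → q ∈ MQ.gr l → j + l = m → p (x ⊗ₜ[k] q))
    (hadd : ∀ v w, p v → p w → p (v + w))
    (hsmul : ∀ (c : k) v, p v → p (c • v)) :
    ∀ v ∈ grM 𝒜 ℬ 𝒩 MQ m, p v := by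
  intro v hv
  refine Submodule.span_induction (p := fun v _ => p v) ?_ h0 (fun x y _ _ => hadd x y)
    (fun c x _ => hsmul c x) hv
  rintro t ⟨j, l, x, q, hx, hq, e, rfl⟩
  exact hgen j l x q hx hq e

lemma map_grM {m m' : ℤ} (T : TensorProduct k N Q →ₗ[k] TensorProduct k N Q)
    (hgen : ∀ (j l : ℤ) (x : N) (q : Q), x ∈ 𝒩.gr j → q ∈ MQ.gr l → j + l = m →
      T (x ⊗ₜ[k] q) ∈ grM 𝒜 ℬ 𝒩 MQ m') :
    ∀ v ∈ grM 𝒜 ℬ 𝒩 MQ m, T v ∈ grM 𝒜 ℬ 𝒩 MQ m' := by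
  refine grM_induction 𝒜 ℬ 𝒩 MQ (by simp) hgen ?_ ?_
  · intro v w hv hw; rw [map_add]; exact Submodule.add_mem _ hv hw
  · intro c v hv; rw [map_smul]; exact Submodule.smul_mem _ _ hv

/-- The component of the decomposition of `N ⊗ Q` in bidegree `p`. -/
noncomputable def piece (p : ℤ × ℤ) :
    TensorProduct k (𝒩.gr p.1) (MQ.gr p.2) →ₗ[k] (⨁ m : ℤ, grM 𝒜 ℬ 𝒩 MQ m) :=
  (DirectSum.lof k ℤ (fun m => grM 𝒜 ℬ 𝒩 MQ m) (p.1 + p.2)) ∘ₗ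
    TensorProduct.lift (LinearMap.mk₂ k
      (fun x q => (⟨(x : N) ⊗ₜ[k] (q : Q), tmul_mem_grM 𝒜 ℬ 𝒩 MQ x.2 q.2 rfl⟩ :
        grM 𝒜 ℬ 𝒩 MQ (p.1 + p.2)))
      (fun x x' q => by apply Subtype.ext; simp [TensorProduct.add_tmul])
      (fun c x q => by apply Subtype.ext; simp [TensorProduct.smul_tmul'])
      (fun x q q' => by apply Subtype.ext; simp [TensorProduct.tmul_add])
      (fun c x q => by apply Subtype.ext; simp [TensorProduct.tmul_smul]))

/-- The decomposition map for `N ⊗ Q`. -/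
noncomputable def decM : TensorProduct k N Q →ₗ[k] ⨁ m : ℤ, grM 𝒜 ℬ 𝒩 MQ m :=
  letI := 𝒩.decomp
  letI := MQ.decomp
  (DirectSum.toModule k (ℤ × ℤ) _ (piece 𝒜 ℬ 𝒩 MQ)) ∘ₗ
    (TensorProduct.directSum k k (fun j => (𝒩.gr j)) (fun l => (MQ.gr l))).toLinearMap ∘ₗ
    TensorProduct.map (DirectSum.decomposeLinearEquiv 𝒩.gr).toLinearMap
      (DirectSum.decomposeLinearEquiv MQ.gr).toLinearMap

lemma decM_tmul {j l : ℤ} {x : N} {q : Q} (hx : x ∈ 𝒩.gr j) (hq : q ∈ MQ.gr l) :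
    decM 𝒜 ℬ 𝒩 MQ (x ⊗ₜ[k] q) = DirectSum.lof k ℤ (fun m => grM 𝒜 ℬ 𝒩 MQ m) (j + l)
      ⟨x ⊗ₜ[k] q, tmul_mem_grM 𝒜 ℬ 𝒩 MQ hx hq rfl⟩ := by
  letI := 𝒩.decomp
  letI := MQ.decomp
  have h1 : DirectSum.decompose 𝒩.gr x = DirectSum.lof k ℤ (fun i => 𝒩.gr i) j ⟨x, hx⟩ := by
    rw [DirectSum.decompose_of_mem 𝒩.gr hx, DirectSum.lof_eq_of]
  have h2 : DirectSum.decompose MQ.gr q = DirectSum.lof k ℤ (fun i => MQ.gr i) l ⟨q, hq⟩ := by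
    rw [DirectSum.decompose_of_mem MQ.gr hq, DirectSum.lof_eq_of]
  simp only [decM, LinearMap.comp_apply, TensorProduct.map_tmul, LinearEquiv.coe_coe,
    DirectSum.decomposeLinearEquiv_apply, h1, h2]
  rw [TensorProduct.directSum_lof_tmul_lof, DirectSum.toModule_lof]
  rfl

lemma decM_of_mem {m : ℤ} {v : TensorProduct k N Q} (hv : v ∈ grM 𝒜 ℬ 𝒩 MQ m) :
    decM 𝒜 ℬ 𝒩 MQ v = DirectSum.lof k ℤ (fun m => grM 𝒜 ℬ 𝒩 MQ m) m ⟨v, hv⟩ := by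
  revert hv
  have : ∀ (v : TensorProduct k N Q) (hv : v ∈ grM 𝒜 ℬ 𝒩 MQ m),
      decM 𝒜 ℬ 𝒩 MQ v = DirectSum.lof k ℤ (fun m => grM 𝒜 ℬ 𝒩 MQ m) m ⟨v, hv⟩ := by
    intro v hv
    refine Submodule.span_induction
      (p := fun v hv => decM 𝒜 ℬ 𝒩 MQ v = DirectSum.lof k ℤ (fun m => grM 𝒜 ℬ 𝒩 MQ m) m ⟨v, hv⟩)
      ?_ ?_ ?_ ?_ hv
    · rintro t ⟨j, l, x, q, hx, hq, e, rfl⟩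
      subst e
      exact decM_tmul 𝒜 ℬ 𝒩 MQ hx hq
    · show decM 𝒜 ℬ 𝒩 MQ (0 : TensorProduct k N Q)
        = DirectSum.lof k ℤ (fun m => grM 𝒜 ℬ 𝒩 MQ m) m ⟨0, Submodule.zero_mem _⟩
      rw [map_zero]
      exact (map_zero (DirectSum.lof k ℤ (fun m => grM 𝒜 ℬ 𝒩 MQ m) m)).symm
    · intro v w hv hw ihv ihw
      rw [map_add, ihv, ihw, ← map_add]
      rfl
    · intro c v hv ih
      rw [map_smul, ih, ← map_smul]
      rfl
  exact this v

lemma coe_decM (v : TensorProduct k N Q) :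
    DirectSum.coeAddMonoidHom (grM 𝒜 ℬ 𝒩 MQ) (decM 𝒜 ℬ 𝒩 MQ v) = v := by
  letI := 𝒩.decomp
  letI := MQ.decomp
  refine TensorProduct.induction_on v (by simp) ?_ ?_
  · intro x q
    refine DirectSum.Decomposition.inductionOn 𝒩.gr
      (motive := fun x => DirectSum.coeAddMonoidHom (grM 𝒜 ℬ 𝒩 MQ) (decM 𝒜 ℬ 𝒩 MQ (x ⊗ₜ[k] q)) = x ⊗ₜ[k] q)
      ?_ ?_ ?_ x
    · simp [TensorProduct.zero_tmul]
    · intro jx xx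
      refine DirectSum.Decomposition.inductionOn MQ.gr
        (motive := fun q => DirectSum.coeAddMonoidHom (grM 𝒜 ℬ 𝒩 MQ)
          (decM 𝒜 ℬ 𝒩 MQ ((xx : N) ⊗ₜ[k] q)) = (xx : N) ⊗ₜ[k] q)
        ?_ ?_ ?_ q
      · simp [TensorProduct.tmul_zero]
      · intro lq qq
        rw [decM_tmul 𝒜 ℬ 𝒩 MQ xx.2 qq.2, DirectSum.lof_eq_of, DirectSum.coeAddMonoidHom_of]
      · intro q1 q2 h1 h2
        rw [TensorProduct.tmul_add, map_add, map_add, h1, h2]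
    · intro x1 x2 h1 h2
      rw [TensorProduct.add_tmul, map_add, map_add, h1, h2]
  · intro v w hv hw
    rw [map_add, map_add, hv, hw]

/-- The decomposition of `N ⊗ Q` as a graded module. -/
noncomputable def decompM : DirectSum.Decomposition (grM 𝒜 ℬ 𝒩 MQ) where
  decompose' := decM 𝒜 ℬ 𝒩 MQ
  left_inv v := coe_decM 𝒜 ℬ 𝒩 MQ v
  right_inv w := by
    refine DirectSum.induction_on w (by simp) ?_ ?_
    · intro m u
      have : DirectSum.coeAddMonoidHom (grM 𝒜 ℬ 𝒩 MQ) (DirectSum.of _ m u) = (u : TensorProduct k N Q) :=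
        DirectSum.coeAddMonoidHom_of _ _ _
      rw [this, decM_of_mem 𝒜 ℬ 𝒩 MQ u.2, DirectSum.lof_eq_of]
    · intro w1 w2 h1 h2
      rw [map_add, map_add, h1, h2]

end TensorMod
end S5

lemma S5.esucc {k : Type u} [Field k] (m : ℤ) : ((-1:k)) ^ (m + 1) = -((-1:k) ^ m) := by
  rw [S5.eadd]; simp

lemma S5.epred {k : Type u} [Field k] (m : ℤ) : ((-1:k)) ^ (m - 1) = -((-1:k) ^ m) := by
  have h := S5.esucc (k := k) (m - 1)
  rw [show m - 1 + 1 = m by omega] at h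
  rw [h, neg_neg]

lemma S5.etwo {k : Type u} [Field k] (x y : ℤ) : ((-1:k)) ^ (x + 2 * y) = (-1:k) ^ x := by
  rw [S5.eadd, zpow_mul]
  norm_num

namespace S5
section BigStructure
set_option synthInstance.maxHeartbeats 1000000
set_option maxHeartbeats 1600000

variable {k : Type u} [Field k] {A : Type v} [Ring A] [Algebra k A]
variable {B : Type v} [Ring B] [Algebra k B]
variable {N : Type w} [AddCommGroup N] [Module k N]
variable {Q : Type w} [AddCommGroup Q] [Module k Q]
variable (𝒜 : ConnCDGA k A) (ℬ : ConnCDGA k B) (𝒩 : DGMod 𝒜 N) (MQ : DGMod ℬ Q)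

lemma sgn_comp (m n : ℤ) (x : N) : sgn 𝒜 𝒩 (m + n) x = sgn 𝒜 𝒩 m (sgn 𝒜 𝒩 n x) := by
  letI := 𝒩.decomp
  refine DirectSum.Decomposition.inductionOn 𝒩.gr
    (motive := fun x => sgn 𝒜 𝒩 (m + n) x = sgn 𝒜 𝒩 m (sgn 𝒜 𝒩 n x)) ?_ ?_ ?_ x
  · simp
  · intro j x
    rw [sgn_of_mem 𝒜 𝒩 n x.2, map_smul, sgn_of_mem 𝒜 𝒩 m x.2, sgn_of_mem 𝒜 𝒩 (m+n) x.2,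
      smul_smul, ← eadd, show n * j + m * j = (m + n) * j by ring]
  · intro a b ha hb
    rw [map_add, map_add, map_add, ha, hb]

lemma sgn_zero' (x : N) : sgn 𝒜 𝒩 0 x = x := by
  letI := 𝒩.decomp
  refine DirectSum.Decomposition.inductionOn 𝒩.gr (motive := fun x => sgn 𝒜 𝒩 0 x = x) ?_ ?_ ?_ x
  · simp
  · intro j x
    rw [sgn_of_mem 𝒜 𝒩 0 x.2, zero_mul, zpow_zero, one_smul]
  · intro a b ha hb
    rw [map_add, ha, hb]

lemma leibniz_lemma {i : ℤ} {a : A} (ha : a ∈ 𝒜.gr i) (v : TensorProduct k N Q) :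
    DM 𝒜 ℬ 𝒩 MQ (TensorProduct.map (aN 𝒜 𝒩 a) LinearMap.id v)
      = TensorProduct.map (aN 𝒜 𝒩 (𝒜.d a)) LinearMap.id v
        + ((-1:k) ^ i) • TensorProduct.map (aN 𝒜 𝒩 a) LinearMap.id (DM 𝒜 ℬ 𝒩 MQ v) := by
  letI := 𝒩.decomp
  refine TensorProduct.induction_on v (by simp) ?_ ?_
  · intro x q
    refine DirectSum.Decomposition.inductionOn 𝒩.gr
      (motive := fun x => DM 𝒜 ℬ 𝒩 MQ (TensorProduct.map (aN 𝒜 𝒩 a) LinearMap.id (x ⊗ₜ[k] q))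
        = TensorProduct.map (aN 𝒜 𝒩 (𝒜.d a)) LinearMap.id (x ⊗ₜ[k] q)
          + ((-1:k) ^ i) • TensorProduct.map (aN 𝒜 𝒩 a) LinearMap.id
            (DM 𝒜 ℬ 𝒩 MQ (x ⊗ₜ[k] q))) ?_ ?_ ?_ x
    · simp [TensorProduct.zero_tmul]
    · intro j xx
      rw [TensorProduct.map_tmul, TensorProduct.map_tmul, LinearMap.id_apply, aN_apply,
        aN_apply, DM_tmul 𝒜 ℬ 𝒩 MQ (𝒩.smul_mem ha xx.2) q, 𝒩.leibniz _ ha,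
        DM_tmul 𝒜 ℬ 𝒩 MQ xx.2 q, map_add, map_smul, TensorProduct.map_tmul,
        TensorProduct.map_tmul, LinearMap.id_apply, LinearMap.id_apply, aN_apply, aN_apply,
        TensorProduct.add_tmul, TensorProduct.smul_tmul', smul_add, smul_smul, ← eadd, add_assoc]
      simp only [TensorProduct.smul_tmul']
    · intro v1 v2 h1 h2
      simp only [TensorProduct.add_tmul, map_add, smul_add]
      rw [h1, h2]
      abel
  · intro v1 v2 h1 h2
    simp only [map_add, smul_add]
    rw [h1, h2]
    abel

lemma bleibniz_lemma {m : ℤ} {b : B} (hb : b ∈ ℬ.gr m) (v : TensorProduct k N Q) :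
    DM 𝒜 ℬ 𝒩 MQ (Φ 𝒜 ℬ 𝒩 MQ b v)
      = Φ 𝒜 ℬ 𝒩 MQ (ℬ.d b) v + ((-1:k) ^ m) • Φ 𝒜 ℬ 𝒩 MQ b (DM 𝒜 ℬ 𝒩 MQ v) := by
  letI := 𝒩.decomp
  refine TensorProduct.induction_on v (by simp) ?_ ?_
  · intro x q
    refine DirectSum.Decomposition.inductionOn 𝒩.gr
      (motive := fun x => DM 𝒜 ℬ 𝒩 MQ (Φ 𝒜 ℬ 𝒩 MQ b (x ⊗ₜ[k] q))
        = Φ 𝒜 ℬ 𝒩 MQ (ℬ.d b) (x ⊗ₜ[k] q)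
          + ((-1:k) ^ m) • Φ 𝒜 ℬ 𝒩 MQ b (DM 𝒜 ℬ 𝒩 MQ (x ⊗ₜ[k] q))) ?_ ?_ ?_ x
    · simp [TensorProduct.zero_tmul]
    · intro p xx
      rw [Φ_tmul 𝒜 ℬ 𝒩 MQ hb xx.2 q, map_smul, DM_tmul 𝒜 ℬ 𝒩 MQ xx.2 (MQ.smul b q),
        MQ.leibniz _ hb, Φ_tmul 𝒜 ℬ 𝒩 MQ (ℬ.d_mem hb) xx.2 q,
        DM_tmul 𝒜 ℬ 𝒩 MQ xx.2 q, map_add, map_smul,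
        Φ_tmul 𝒜 ℬ 𝒩 MQ hb (𝒩.d_mem xx.2) q, Φ_tmul 𝒜 ℬ 𝒩 MQ hb xx.2 (MQ.d q)]
      rw [TensorProduct.tmul_add, TensorProduct.tmul_smul]
      simp only [smul_add, smul_smul, ← eadd]
      rw [show m + m * (p + 1) = m * p + 2 * m by ring,
        show (m + 1) * p = m * p + p by ring,
        show m + (p + m * p) = m * p + p + m by ring, etwo]
      abel
    · intro v1 v2 h1 h2
      simp only [TensorProduct.add_tmul, map_add, smul_add]
      rw [h1, h2]
      abel
  · intro v1 v2 h1 h2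
    simp only [map_add, smul_add]
    rw [h1, h2]
    abel

lemma ab_compat_lemma {i j : ℤ} {a : A} {b : B} (ha : a ∈ 𝒜.gr i) (hb : b ∈ ℬ.gr j)
    (v : TensorProduct k N Q) :
    TensorProduct.map (aN 𝒜 𝒩 a) LinearMap.id (Φ 𝒜 ℬ 𝒩 MQ b v)
      = ((-1:k) ^ (i * j)) • Φ 𝒜 ℬ 𝒩 MQ b
          (TensorProduct.map (aN 𝒜 𝒩 a) LinearMap.id v) := by
  letI := 𝒩.decomp
  refine TensorProduct.induction_on v (by simp) ?_ ?_
  · intro x q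
    refine DirectSum.Decomposition.inductionOn 𝒩.gr
      (motive := fun x => TensorProduct.map (aN 𝒜 𝒩 a) LinearMap.id (Φ 𝒜 ℬ 𝒩 MQ b (x ⊗ₜ[k] q))
        = ((-1:k) ^ (i * j)) • Φ 𝒜 ℬ 𝒩 MQ b
            (TensorProduct.map (aN 𝒜 𝒩 a) LinearMap.id (x ⊗ₜ[k] q))) ?_ ?_ ?_ x
    · simp [TensorProduct.zero_tmul]
    · intro p xx
      rw [Φ_tmul 𝒜 ℬ 𝒩 MQ hb xx.2 q, map_smul, TensorProduct.map_tmul, LinearMap.id_apply,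
        aN_apply, TensorProduct.map_tmul, LinearMap.id_apply, aN_apply,
        Φ_tmul 𝒜 ℬ 𝒩 MQ hb (𝒩.smul_mem ha xx.2) q]
      simp only [smul_smul, ← eadd]
      rw [show i * j + j * (i + p) = j * p + 2 * (i * j) by ring, etwo]
    · intro v1 v2 h1 h2
      simp only [TensorProduct.add_tmul, map_add, smul_add]
      rw [h1, h2]
  · intro v1 v2 h1 h2
    simp only [map_add, smul_add]
    rw [h1, h2]

/-- The DG `A ⊗ B`-module structure on `N ⊗ Q`. -/
noncomputable def MT : DGBiActMod 𝒜 ℬ (TensorProduct k N Q) where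
  smul a v := TensorProduct.map (aN 𝒜 𝒩 a) LinearMap.id v
  smul_add a m n := map_add _ m n
  add_smul a b v := by
    beta_reduce
    have h : aN 𝒜 𝒩 (a + b) = aN 𝒜 𝒩 a + aN 𝒜 𝒩 b :=
      LinearMap.ext fun x => 𝒩.add_smul a b x
    rw [h, TensorProduct.map_add_left]
    rfl
  mul_smul a b v := by
    beta_reduce
    have h : aN 𝒜 𝒩 (a * b) = (aN 𝒜 𝒩 a) ∘ₗ (aN 𝒜 𝒩 b) :=
      LinearMap.ext fun x => 𝒩.mul_smul a b x
    have h2 : (LinearMap.id : Q →ₗ[k] Q) = LinearMap.id ∘ₗ LinearMap.id := rfl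
    rw [h]
    conv_lhs => rw [h2]
    rw [TensorProduct.map_comp]
    rfl
  one_smul v := by
    beta_reduce
    have h : aN 𝒜 𝒩 (1 : A) = LinearMap.id := LinearMap.ext fun x => 𝒩.one_smul x
    rw [h, TensorProduct.map_id]
    rfl
  ksmul_left c a v := by
    beta_reduce
    have h : aN 𝒜 𝒩 (c • a) = c • aN 𝒜 𝒩 a := LinearMap.ext fun x => 𝒩.ksmul_left c a x
    rw [h, TensorProduct.map_smul_left]
    rfl
  ksmul_right c a v := map_smul _ c v
  gr := grM 𝒜 ℬ 𝒩 MQ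
  decomp := decompM 𝒜 ℬ 𝒩 MQ
  smul_mem := by
    intro i j a v ha hv
    beta_reduce
    refine map_grM 𝒜 ℬ 𝒩 MQ _ ?_ v hv
    intro p l x q hx hq e
    rw [TensorProduct.map_tmul]
    exact tmul_mem_grM 𝒜 ℬ 𝒩 MQ (𝒩.smul_mem ha hx) hq (by omega)
  d := DM 𝒜 ℬ 𝒩 MQ
  d_mem := by
    intro i v hv
    beta_reduce
    refine map_grM 𝒜 ℬ 𝒩 MQ _ ?_ v hv
    intro p l x q hx hq e
    rw [DM_tmul 𝒜 ℬ 𝒩 MQ hx q]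
    refine Submodule.add_mem _ ?_ (Submodule.smul_mem _ _ ?_)
    · exact tmul_mem_grM 𝒜 ℬ 𝒩 MQ (𝒩.d_mem hx) hq (by omega)
    · exact tmul_mem_grM 𝒜 ℬ 𝒩 MQ hx (MQ.d_mem hq) (by omega)
  d_sq v := by
    letI := 𝒩.decomp
    beta_reduce
    refine TensorProduct.induction_on v (by simp) ?_
      (fun a b ha hb => by rw [map_add, map_add, ha, hb, add_zero])
    intro x q
    refine DirectSum.Decomposition.inductionOn 𝒩.gr
      (motive := fun x => DM 𝒜 ℬ 𝒩 MQ (DM 𝒜 ℬ 𝒩 MQ (x ⊗ₜ[k] q)) = 0) ?_ ?_ ?_ x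
    · simp [TensorProduct.zero_tmul]
    · intro j xx
      rw [DM_tmul 𝒜 ℬ 𝒩 MQ xx.2 q, map_add, map_smul, DM_tmul 𝒜 ℬ 𝒩 MQ (𝒩.d_mem xx.2) q,
        DM_tmul 𝒜 ℬ 𝒩 MQ xx.2 (MQ.d q), 𝒩.d_sq, MQ.d_sq, TensorProduct.zero_tmul,
        TensorProduct.tmul_zero, zero_add, smul_zero, add_zero]
      rw [esucc, neg_smul, neg_add_cancel]
    · intro a b ha hb
      have h : (a + b) ⊗ₜ[k] q = a ⊗ₜ[k] q + b ⊗ₜ[k] q := TensorProduct.add_tmul a b q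
      rw [h, map_add, map_add, ha, hb, add_zero]
  leibniz := fun v ha => leibniz_lemma 𝒜 ℬ 𝒩 MQ ha v
  bsmul b v := Φ 𝒜 ℬ 𝒩 MQ b v
  bsmul_add b m n := map_add _ m n
  add_bsmul b c v := by beta_reduce; rw [map_add]; rfl
  mul_bsmul := by
    intro b c v
    letI := ℬ.decomp
    beta_reduce
    refine DirectSum.Decomposition.inductionOn ℬ.gr
      (motive := fun b => ∀ c v, Φ 𝒜 ℬ 𝒩 MQ (b * c) v = Φ 𝒜 ℬ 𝒩 MQ b (Φ 𝒜 ℬ 𝒩 MQ c v)) ?_ ?_ ?_ b c v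
    · intro c v; simp
    · intro m bb c
      refine DirectSum.Decomposition.inductionOn ℬ.gr
        (motive := fun c => ∀ v, Φ 𝒜 ℬ 𝒩 MQ ((bb : B) * c) v
          = Φ 𝒜 ℬ 𝒩 MQ (bb : B) (Φ 𝒜 ℬ 𝒩 MQ c v)) ?_ ?_ ?_ c
      · intro v; simp
      · intro n cc v
        rw [Φ_of_mem 𝒜 ℬ 𝒩 MQ (ℬ.mul_mem bb.2 cc.2), Φ_of_mem 𝒜 ℬ 𝒩 MQ bb.2,
          Φ_of_mem 𝒜 ℬ 𝒩 MQ cc.2]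
        have h1 : sgn 𝒜 𝒩 (m + n) = (sgn 𝒜 𝒩 m) ∘ₗ (sgn 𝒜 𝒩 n) :=
          LinearMap.ext fun x => sgn_comp 𝒜 𝒩 m n x
        have h2 : bQ ℬ MQ ((bb : B) * (cc : B)) = (bQ ℬ MQ (bb : B)) ∘ₗ (bQ ℬ MQ (cc : B)) :=
          LinearMap.ext fun q => MQ.mul_smul _ _ q
        rw [h1, h2, TensorProduct.map_comp]
        rfl
      · intro c1 c2 h1 h2 v
        rw [mul_add, map_add, map_add, LinearMap.add_apply, LinearMap.add_apply, h1 v, h2 v,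
          map_add]
    · intro b1 b2 h1 h2 c v
      rw [add_mul, map_add, map_add, LinearMap.add_apply, LinearMap.add_apply, h1 c v, h2 c v]
  one_bsmul v := by
    beta_reduce
    rw [Φ_of_mem 𝒜 ℬ 𝒩 MQ ℬ.one_mem]
    have h1 : sgn 𝒜 𝒩 0 = LinearMap.id := LinearMap.ext fun x => sgn_zero' 𝒜 𝒩 x
    have h2 : bQ ℬ MQ (1 : B) = LinearMap.id := LinearMap.ext fun q => MQ.one_smul q
    rw [h1, h2, TensorProduct.map_id]
    rfl
  kbsmul_left c b v := by beta_reduce; rw [map_smul]; rfl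
  kbsmul_right c b v := map_smul _ c v
  bsmul_mem := by
    intro i j b v hb hv
    beta_reduce
    rw [Φ_of_mem 𝒜 ℬ 𝒩 MQ hb]
    refine map_grM 𝒜 ℬ 𝒩 MQ _ ?_ v hv
    intro p l x q hx hq e
    rw [TensorProduct.map_tmul, sgn_of_mem 𝒜 𝒩 i hx, bQ_apply, ← TensorProduct.smul_tmul']
    exact Submodule.smul_mem _ _ (tmul_mem_grM 𝒜 ℬ 𝒩 MQ hx (MQ.smul_mem hb hq) (by omega))
  bleibniz := fun v hb => bleibniz_lemma 𝒜 ℬ 𝒩 MQ hb v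
  ab_compat := fun v ha hb => ab_compat_lemma 𝒜 ℬ 𝒩 MQ ha hb v

lemma MT_acyclic (hac : 𝒩.IsAcyclic) :
    ∀ v : TensorProduct k N Q, DM 𝒜 ℬ 𝒩 MQ v = 0 → ∃ w, DM 𝒜 ℬ 𝒩 MQ w = v := by
  have key : ∀ v, DM 𝒜 ℬ 𝒩 MQ (TensorProduct.map (ht 𝒜 𝒩 hac) LinearMap.id v)
      + TensorProduct.map (ht 𝒜 𝒩 hac) LinearMap.id (DM 𝒜 ℬ 𝒩 MQ v) = v := by
    intro v
    letI := 𝒩.decomp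
    refine TensorProduct.induction_on v (by simp) ?_ ?_
    · intro x q
      refine DirectSum.Decomposition.inductionOn 𝒩.gr
        (motive := fun x => DM 𝒜 ℬ 𝒩 MQ (TensorProduct.map (ht 𝒜 𝒩 hac) LinearMap.id (x ⊗ₜ[k] q))
          + TensorProduct.map (ht 𝒜 𝒩 hac) LinearMap.id (DM 𝒜 ℬ 𝒩 MQ (x ⊗ₜ[k] q))
          = x ⊗ₜ[k] q) ?_ ?_ ?_ x
      · simp [TensorProduct.zero_tmul]
      · intro j xx
        rw [TensorProduct.map_tmul, LinearMap.id_apply, DM_tmul 𝒜 ℬ 𝒩 MQ (ht_mem 𝒜 𝒩 hac xx.2) q,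
          DM_tmul 𝒜 ℬ 𝒩 MQ xx.2 q, map_add, map_smul, TensorProduct.map_tmul,
          TensorProduct.map_tmul, LinearMap.id_apply, LinearMap.id_apply, epred, neg_smul]
        have hid := homotopy_id 𝒜 𝒩 hac xx.2
        calc 𝒩.d (ht 𝒜 𝒩 hac (xx : N)) ⊗ₜ[k] q + -(((-1:k) ^ j) • ht 𝒜 𝒩 hac (xx : N) ⊗ₜ[k] MQ.d q)
            + (ht 𝒜 𝒩 hac (𝒩.d (xx : N)) ⊗ₜ[k] q + ((-1:k) ^ j) • ht 𝒜 𝒩 hac (xx : N) ⊗ₜ[k] MQ.d q)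
            = (𝒩.d (ht 𝒜 𝒩 hac (xx : N)) + ht 𝒜 𝒩 hac (𝒩.d (xx : N))) ⊗ₜ[k] q := by
              rw [TensorProduct.add_tmul]; abel
          _ = (xx : N) ⊗ₜ[k] q := by rw [hid]
      · intro v1 v2 h1 h2
        simp only [TensorProduct.add_tmul, map_add]
        rw [add_add_add_comm, h1, h2]
    · intro v1 v2 h1 h2
      simp only [map_add]
      rw [add_add_add_comm, h1, h2]
  intro v hv
  refine ⟨TensorProduct.map (ht 𝒜 𝒩 hac) LinearMap.id v, ?_⟩
  have := key v
  rw [hv, map_zero, add_zero] at this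
  exact this

end BigStructure
end S5


/-- Let `A`, `B` be connected cochain DG algebras over `k` and let `E`
be a DG `A⊗B`-module such that `Hom_{A⊗B}(M, E)` is acyclic for every acyclic DG
`A⊗B`-module `M` (i.e. `E` is semi-injective over `A⊗B`). Then for any left DG `B`-module
`Q`, the left DG `A`-module `Hom_B(Q, E)` satisfies: `Hom_A(N, Hom_B(Q, E))` is acyclic
for every acyclic left DG `A`-module `N` (i.e. `Hom_B(Q, E)` is semi-injective over `A`). -/
theorem hom_of_semiinjective_is_semiinjective
    {k : Type u} [Field k] {A : Type v} [Ring A] [Algebra k A]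
    {B : Type v} [Ring B] [Algebra k B]
    (𝒜 : ConnCDGA k A) (ℬ : ConnCDGA k B) {E : Type w} [AddCommGroup E] [Module k E]
    (ME : DGBiActMod 𝒜 ℬ E)
    (hE : ∀ (M : Type w) [AddCommGroup M] [Module k M] (ℳ : DGBiActMod 𝒜 ℬ M),
      (∀ m : M, ℳ.d m = 0 → ∃ x : M, ℳ.d x = m) → ABHomAcyclic ℳ ME) :
    ∀ (Q : Type w) [AddCommGroup Q] [Module k Q] (MQ : DGMod ℬ Q),
    ∀ (N : Type w) [AddCommGroup N] [Module k N] (𝒩 : DGMod 𝒜 N),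
      𝒩.IsAcyclic →
      ∀ (i : ℤ) (f : HomHomDeg 𝒩 MQ ME i),
        (∀ (j : ℤ) (x : N), x ∈ 𝒩.gr j → ∀ q : Q,
          ME.d (f.toFun x q) - ((-1 : k) ^ (i + j)) • f.toFun x (MQ.d q)
            - ((-1 : k) ^ i) • f.toFun (𝒩.d x) q = 0) →
        ∃ g : HomHomDeg 𝒩 MQ ME (i - 1),
          ∀ (j : ℤ) (x : N), x ∈ 𝒩.gr j → ∀ q : Q,
            f.toFun x q = ME.d (g.toFun x q)
              - ((-1 : k) ^ (i - 1 + j)) • g.toFun x (MQ.d q)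
              - ((-1 : k) ^ (i - 1)) • g.toFun (𝒩.d x) q := by
  intro Q _ _ MQ N _ _ 𝒩 hac i f hf
  classical
  letI := 𝒩.decomp
  let ℳ : DGBiActMod 𝒜 ℬ (TensorProduct k N Q) := S5.MT 𝒜 ℬ 𝒩 MQ
  let Bf : N →ₗ[k] Q →ₗ[k] E :=
    { toFun := fun x =>
        { toFun := f.toFun x
          map_add' := f.map_add₂ x
          map_smul' := fun c q => f.map_ksmul₂ c x q }
      map_add' := fun x y => LinearMap.ext fun q => f.map_add₁ x y q
      map_smul' := fun c x => LinearMap.ext fun q => f.map_ksmul₁ c x q }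
  let F0 : TensorProduct k N Q →ₗ[k] E := TensorProduct.lift Bf
  have F0_tmul : ∀ (x : N) (q : Q), F0 (x ⊗ₜ[k] q) = f.toFun x q := fun x q => rfl
  have hsmul0 : ∀ a : A, ME.smul a (0 : E) = 0 := by
    intro a
    have h := ME.smul_add a 0 0
    rw [add_zero] at h
    have h2 : ME.smul a (0 : E) + 0 = ME.smul a 0 + ME.smul a 0 := by rw [add_zero]; exact h
    exact (add_left_cancel h2).symm
  have hbsmul0 : ∀ b : B, ME.bsmul b (0 : E) = 0 := by
    intro b
    have h := ME.bsmul_add b 0 0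
    rw [add_zero] at h
    have h2 : ME.bsmul b (0 : E) + 0 = ME.bsmul b 0 + ME.bsmul b 0 := by rw [add_zero]; exact h
    exact (add_left_cancel h2).symm
  -- the cocycle condition for the lifted map
  have chain : ∀ v : TensorProduct k N Q,
      ME.d (F0 v) = ((-1:k) ^ i) • F0 (S5.DM 𝒜 ℬ 𝒩 MQ v) := by
    intro v
    refine TensorProduct.induction_on v (by simp) ?_ ?_
    · intro x q
      refine DirectSum.Decomposition.inductionOn 𝒩.gr
        (motive := fun x => ME.d (F0 (x ⊗ₜ[k] q))
          = ((-1:k) ^ i) • F0 (S5.DM 𝒜 ℬ 𝒩 MQ (x ⊗ₜ[k] q))) ?_ ?_ ?_ x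
      · simp [TensorProduct.zero_tmul]
      · intro j xx
        have h0 := hf j (xx : N) xx.2 q
        have h1 : ME.d (f.toFun (xx : N) q) - ((-1:k) ^ (i + j)) • f.toFun (xx : N) (MQ.d q)
            = ((-1:k) ^ i) • f.toFun (𝒩.d (xx : N)) q := sub_eq_zero.mp h0
        have h2 : ME.d (f.toFun (xx : N) q)
            = ((-1:k) ^ i) • f.toFun (𝒩.d (xx : N)) q
              + ((-1:k) ^ (i + j)) • f.toFun (xx : N) (MQ.d q) :=
          sub_eq_iff_eq_add.mp h1
        rw [F0_tmul, h2, S5.DM_tmul 𝒜 ℬ 𝒩 MQ xx.2 q, map_add, map_smul, F0_tmul, F0_tmul,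
          smul_add, smul_smul, ← S5.eadd]
      · intro v1 v2 h1 h2
        simp only [TensorProduct.add_tmul, map_add, smul_add, h1, h2]
    · intro v1 v2 h1 h2
      simp only [map_add, smul_add, h1, h2]
  -- the HomDeg structure on the lifted map
  have hmapgr : ∀ (j : ℤ) (v : TensorProduct k N Q), v ∈ S5.grM 𝒜 ℬ 𝒩 MQ j →
      F0 v ∈ ME.gr (j + i) := by
    intro j v hv
    refine S5.grM_induction 𝒜 ℬ 𝒩 MQ (p := fun v => F0 v ∈ ME.gr (j + i)) ?_ ?_ ?_ ?_ v hv
    · show F0 (0 : TensorProduct k N Q) ∈ ME.gr (j + i)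
      rw [map_zero]; exact Submodule.zero_mem _
    · intro p l x q hx hq e
      have := f.map_gr hx hq
      rwa [show i + p + l = j + i by omega] at this
    · intro v w hv hw
      rw [map_add]; exact Submodule.add_mem _ hv hw
    · intro c v hv
      rw [map_smul]; exact Submodule.smul_mem _ _ hv
  have hmapsmul : ∀ (j : ℤ) (a : A) (v : TensorProduct k N Q), a ∈ 𝒜.gr j →
      F0 (TensorProduct.map (S5.aN 𝒜 𝒩 a) LinearMap.id v)
        = ((-1:k) ^ (i * j)) • ME.smul a (F0 v) := by
    intro j a v ha
    refine TensorProduct.induction_on v (by simp [hsmul0 a]) ?_ ?_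
    · intro x q
      rw [TensorProduct.map_tmul, LinearMap.id_apply, S5.aN_apply, F0_tmul, F0_tmul]
      exact f.map_asmul x q ha
    · intro v1 v2 h1 h2
      simp only [map_add, h1, h2, ME.smul_add, smul_add]
  have hmapbsmul : ∀ (j : ℤ) (b : B) (v : TensorProduct k N Q), b ∈ ℬ.gr j →
      F0 (S5.Φ 𝒜 ℬ 𝒩 MQ b v) = ((-1:k) ^ (i * j)) • ME.bsmul b (F0 v) := by
    intro j b v hb
    refine TensorProduct.induction_on v (by simp [hbsmul0 b]) ?_ ?_
    · intro x q
      refine DirectSum.Decomposition.inductionOn 𝒩.gr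
        (motive := fun x => F0 (S5.Φ 𝒜 ℬ 𝒩 MQ b (x ⊗ₜ[k] q))
          = ((-1:k) ^ (i * j)) • ME.bsmul b (F0 (x ⊗ₜ[k] q))) ?_ ?_ ?_ x
      · simp [TensorProduct.zero_tmul, hbsmul0 b]
      · intro p xx
        rw [S5.Φ_tmul 𝒜 ℬ 𝒩 MQ hb xx.2 q, map_smul, F0_tmul, F0_tmul,
          f.map_bsmul q xx.2 hb, smul_smul, ← S5.eadd,
          show j * p + (i + p) * j = i * j + 2 * (p * j) by ring, S5.etwo]
      · intro v1 v2 h1 h2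
        simp only [TensorProduct.add_tmul, map_add, h1, h2, ME.bsmul_add, smul_add]
    · intro v1 v2 h1 h2
      simp only [map_add, h1, h2, ME.bsmul_add, smul_add]
  let FAB : ABHomDeg ℳ ME i :=
    { toFun := fun v => F0 v
      map_add := fun x y => F0.map_add x y
      map_ksmul := fun c x => F0.map_smul c x
      map_gr := fun {j x} hx => hmapgr j x hx
      map_smul := fun {j a} x ha => hmapsmul j a x ha
      map_bsmul := fun {j b} x hb => hmapbsmul j b x hb }
  obtain ⟨g, hg⟩ := hE (TensorProduct k N Q) ℳ (S5.MT_acyclic 𝒜 ℬ 𝒩 MQ hac) i FAB chain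
  -- convert the primitive back
  refine ⟨{ toFun := fun x q => g.toFun (x ⊗ₜ[k] q)
            map_add₁ := fun x y q => by
              show g.toFun ((x + y) ⊗ₜ[k] q) = g.toFun (x ⊗ₜ[k] q) + g.toFun (y ⊗ₜ[k] q)
              rw [TensorProduct.add_tmul]; exact g.map_add _ _
            map_ksmul₁ := fun c x q => by
              show g.toFun ((c • x) ⊗ₜ[k] q) = c • g.toFun (x ⊗ₜ[k] q)
              rw [← TensorProduct.smul_tmul']; exact g.map_ksmul c _
            map_add₂ := fun x q r => by
              show g.toFun (x ⊗ₜ[k] (q + r)) = g.toFun (x ⊗ₜ[k] q) + g.toFun (x ⊗ₜ[k] r)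
              rw [TensorProduct.tmul_add]; exact g.map_add _ _
            map_ksmul₂ := fun c x q => by
              show g.toFun (x ⊗ₜ[k] (c • q)) = c • g.toFun (x ⊗ₜ[k] q)
              rw [TensorProduct.tmul_smul]; exact g.map_ksmul c _
            map_gr := ?_
            map_bsmul := ?_
            map_asmul := ?_ }, ?_⟩
  · intro j l x q hx hq
    beta_reduce
    have := g.map_gr (S5.tmul_mem_grM 𝒜 ℬ 𝒩 MQ hx hq rfl)
    rwa [show j + l + (i - 1) = i - 1 + j + l by omega] at this
  · intro j m x b q hx hb
    beta_reduce
    have h1 := S5.Φ_tmul 𝒜 ℬ 𝒩 MQ hb hx q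
    have h2 : x ⊗ₜ[k] MQ.smul b q = ((-1:k) ^ (m * j)) • S5.Φ 𝒜 ℬ 𝒩 MQ b (x ⊗ₜ[k] q) := by
      rw [h1, smul_smul, S5.esq, one_smul]
    rw [h2, g.map_ksmul,
      show S5.Φ 𝒜 ℬ 𝒩 MQ b (x ⊗ₜ[k] q) = ℳ.bsmul b (x ⊗ₜ[k] q) from rfl,
      g.map_bsmul _ hb, smul_smul, ← S5.eadd,
      show m * j + (i - 1) * m = (i - 1 + j) * m by ring]
  · intro m a x q ha
    beta_reduce
    have h1 : TensorProduct.map (S5.aN 𝒜 𝒩 a) LinearMap.id (x ⊗ₜ[k] q)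
        = 𝒩.smul a x ⊗ₜ[k] q := by rw [TensorProduct.map_tmul]; rfl
    have h2 := g.map_smul (x ⊗ₜ[k] q) ha
    rw [← h1]
    exact h2
  · intro j x hx q
    beta_reduce
    have h0 := hg (x ⊗ₜ[k] q)
    have h1 : g.toFun (S5.DM 𝒜 ℬ 𝒩 MQ (x ⊗ₜ[k] q))
        = g.toFun (𝒩.d x ⊗ₜ[k] q) + ((-1:k) ^ j) • g.toFun (x ⊗ₜ[k] MQ.d q) := by
      rw [S5.DM_tmul 𝒜 ℬ 𝒩 MQ hx q, g.map_add, g.map_ksmul]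
    have h2 : FAB.toFun (x ⊗ₜ[k] q) = f.toFun x q := rfl
    rw [h2] at h0
    rw [h0]
    have h3 : ME.d (g.toFun (x ⊗ₜ[k] q))
        - ((-1:k) ^ (i - 1)) • g.toFun (ℳ.d (x ⊗ₜ[k] q))
        = ME.d (g.toFun (x ⊗ₜ[k] q))
          - ((-1:k) ^ (i - 1 + j)) • g.toFun (x ⊗ₜ[k] MQ.d q)
          - ((-1:k) ^ (i - 1)) • g.toFun (𝒩.d x ⊗ₜ[k] q) := by
      have hdd : ℳ.d (x ⊗ₜ[k] q) = S5.DM 𝒜 ℬ 𝒩 MQ (x ⊗ₜ[k] q) := rfl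
      rw [hdd, h1, smul_add, smul_smul, ← S5.eadd, sub_add_eq_sub_sub, sub_right_comm]
    exact h3
end

section
/- Let A be a connected cochain DG algebra over a field k and let M be a left DG A-module with dim_k H(M) = 1, say H^d(M) ≠ 0 for the (unique) integer d. Then there exists a DG A-submodule T of M such that the inclusion T ↪ M is a quasi-isomorphism and such that there is a surjective morphism of DG A-modules T → k_d which is a quasi-isomorphism, where k_d denotes the trivial DG A-module k concentrated in degree d (with A^{≥1} acting as zero, A^0 = k acting by multiplication, and zero differential). In particular, M is isomorphic to a shift of the trivial module k in the derived category of DG A-modules. -/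
/-!
Common infrastructure: connected cochain DG algebras over a field `k`,
(left/right/bi-) DG modules, Hom-complexes, torsion functors, etc.
-/

universe u v w

open DirectSum TensorProduct

variable {k : Type u} [Field k] {A : Type v} [Ring A] [Algebra k A]
variable {B : Type v} [Ring B] [Algebra k B]

section AuxST7

variable {k : Type u} [Field k] {A : Type v} [Ring A] [Algebra k A]
variable {𝒜 : ConnCDGA k A} {M : Type w} [AddCommGroup M] [Module k M]

namespace DGMod

variable (ℳ : DGMod 𝒜 M)

lemma smul_zero' (a : A) : ℳ.smul a (0 : M) = 0 := by
  have h := ℳ.ksmul_right 0 a 0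
  simpa using h

lemma zero_smul' (m : M) : ℳ.smul (0 : A) m = 0 := by
  have h := ℳ.ksmul_left 0 0 m
  simpa using h

/-- `m ↦ a • m` as a `k`-linear map. -/
def smL (a : A) : M →ₗ[k] M where
  toFun := ℳ.smul a
  map_add' := ℳ.smul_add a
  map_smul' := fun c m => ℳ.ksmul_right c a m

@[simp] lemma smL_apply (a : A) (m : M) : ℳ.smL a m = ℳ.smul a m := rfl

/-- `a ↦ a • m` as a `k`-linear map. -/
def smR (m : M) : A →ₗ[k] M where
  toFun := fun a => ℳ.smul a m
  map_add' := fun a b => ℳ.add_smul a b m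
  map_smul' := fun c a => ℳ.ksmul_left c a m

@[simp] lemma smR_apply (a : A) (m : M) : ℳ.smR m a = ℳ.smul a m := rfl

/-- Projection onto the degree-`i` graded piece, as a `k`-linear map `M →ₗ[k] M`. -/
noncomputable def proj (i : ℤ) : M →ₗ[k] M :=
  letI := ℳ.decomp
  (ℳ.gr i).subtype ∘ₗ (DirectSum.component k ℤ (fun j => (ℳ.gr j : Submodule k M)) i) ∘ₗ
    (DirectSum.decomposeLinearEquiv ℳ.gr).toLinearMap

lemma proj_apply (i : ℤ) (m : M) :
    ℳ.proj i m = (letI := ℳ.decomp; ((DirectSum.decompose ℳ.gr m) i : M)) := rfl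

lemma proj_mem (i : ℤ) (m : M) : ℳ.proj i m ∈ ℳ.gr i := by
  letI := ℳ.decomp
  exact ((DirectSum.decompose ℳ.gr m) i).2

lemma proj_of_mem {i j : ℤ} {m : M} (h : m ∈ ℳ.gr j) :
    ℳ.proj i m = if i = j then m else 0 := by
  letI := ℳ.decomp
  rw [proj_apply]
  split_ifs with hij
  · subst hij; exact DirectSum.decompose_of_mem_same ℳ.gr h
  · exact DirectSum.decompose_of_mem_ne ℳ.gr h (Ne.symm hij)

lemma sum_proj (m : M) :
    ∃ s : Finset ℤ, ∑ i ∈ s, ℳ.proj i m = m := by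
  letI := ℳ.decomp
  classical
  refine ⟨(DirectSum.decompose ℳ.gr m).support, ?_⟩
  conv_rhs => rw [← DirectSum.sum_support_decompose ℳ.gr m]
  rfl

/-- Two linear maps agreeing on homogeneous elements agree everywhere. -/
lemma ext_homog {N : Type*} [AddCommGroup N] [Module k N] {F G : M →ₗ[k] N}
    (h : ∀ (j : ℤ) (x : M), x ∈ ℳ.gr j → F x = G x) (m : M) : F m = G m := by
  classical
  letI := ℳ.decomp
  obtain ⟨s, hs⟩ := ℳ.sum_proj m
  rw [← hs, map_sum, map_sum]
  exact Finset.sum_congr rfl fun i _ => h i _ (ℳ.proj_mem i m)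

lemma proj_d (i : ℤ) (m : M) : ℳ.proj i (ℳ.d m) = ℳ.d (ℳ.proj (i - 1) m) := by
  have := ℳ.ext_homog (F := (ℳ.proj i) ∘ₗ ℳ.d) (G := ℳ.d ∘ₗ (ℳ.proj (i - 1)))
    (fun j x hx => by
      simp only [LinearMap.comp_apply]
      rw [ℳ.proj_of_mem (ℳ.d_mem hx), ℳ.proj_of_mem hx]
      by_cases hij : i = j + 1
      · rw [if_pos hij, if_pos (by omega)]
      · rw [if_neg hij, if_neg (by omega), map_zero]) m
  simpa using this

lemma proj_smul {j : ℤ} {a : A} (ha : a ∈ 𝒜.gr j) (i : ℤ) (m : M) :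
    ℳ.proj i (ℳ.smul a m) = ℳ.smul a (ℳ.proj (i - j) m) := by
  have := ℳ.ext_homog (F := (ℳ.proj i) ∘ₗ ℳ.smL a) (G := (ℳ.smL a) ∘ₗ (ℳ.proj (i - j)))
    (fun l x hx => by
      simp only [LinearMap.comp_apply, smL_apply]
      rw [ℳ.proj_of_mem (ℳ.smul_mem ha hx), ℳ.proj_of_mem hx]
      by_cases hij : i = j + l
      · rw [if_pos hij, if_pos (by omega)]
      · rw [if_neg hij, if_neg (by omega), ℳ.smul_zero']) m
  simpa using this

/-- Membership in a submodule can be checked on homogeneous elements. -/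
lemma mem_of_homog {N : Type*} [AddCommGroup N] [Module k N] {F : M →ₗ[k] N}
    {S : Submodule k N} (h : ∀ (j : ℤ) (x : M), x ∈ ℳ.gr j → F x ∈ S) (m : M) : F m ∈ S := by
  classical
  letI := ℳ.decomp
  obtain ⟨s, hs⟩ := ℳ.sum_proj m
  rw [← hs, map_sum]
  exact Submodule.sum_mem _ fun i _ => h i _ (ℳ.proj_mem i m)

end DGMod

namespace ConnCDGA

variable (𝒜 : ConnCDGA k A)

/-- Decomposition of elements of `A` into homogeneous parts. -/
lemma exists_sum_homog (a : A) :
    ∃ (s : Finset ℤ) (f : ℤ → A), (∀ i ∈ s, f i ∈ 𝒜.gr i) ∧ ∑ i ∈ s, f i = a := by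
  classical
  letI := 𝒜.decomp
  exact ⟨(DirectSum.decompose 𝒜.gr a).support, fun i => ((DirectSum.decompose 𝒜.gr a) i : A),
    fun i _ => ((DirectSum.decompose 𝒜.gr a) i).2, DirectSum.sum_support_decompose 𝒜.gr a⟩

lemma deg_zero_eq {a : A} (ha : a ∈ 𝒜.gr 0) : ∃ c : k, a = c • (1 : A) := by
  rw [𝒜.deg_zero, Submodule.mem_span_singleton] at ha
  obtain ⟨c, hc⟩ := ha
  exact ⟨c, hc.symm⟩

/-- Membership in a submodule can be checked on homogeneous elements (algebra side). -/
lemma mem_of_homog {N : Type*} [AddCommGroup N] [Module k N] {F : A →ₗ[k] N}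
    {S : Submodule k N} (h : ∀ (j : ℤ) (a : A), a ∈ 𝒜.gr j → F a ∈ S) (a : A) : F a ∈ S := by
  classical
  obtain ⟨s, f, hf, hsum⟩ := 𝒜.exists_sum_homog a
  rw [← hsum, map_sum]
  exact Submodule.sum_mem _ fun i hi => h i _ (hf i hi)

end ConnCDGA

lemma DGMod.decompose'_eq_proj (ℳ : DGMod 𝒜 M) (i : ℤ) (t : M) :
    ((ℳ.decomp.decompose' t) i : M) = ℳ.proj i t := rfl

/-- Generators of the DG submodule `T`: start with `z`, close under the homogeneous
`A`-action, the differential, and chosen antiderivatives `σf i t` of homogeneous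
cocycles of degree `i > n₀`. -/
def GsetST7 (𝒜 : ConnCDGA k A) (ℳ : DGMod 𝒜 M) (z : M) (σf : ℤ → M → M) (n₀ : ℤ) :
    ℕ → Set M
  | 0 => {z}
  | n + 1 => GsetST7 𝒜 ℳ z σf n₀ n
      ∪ {m | ∃ (j : ℤ) (a : A) (g : M), a ∈ 𝒜.gr j ∧ g ∈ GsetST7 𝒜 ℳ z σf n₀ n ∧
          m = ℳ.smul a g}
      ∪ {m | ∃ g ∈ GsetST7 𝒜 ℳ z σf n₀ n, m = ℳ.d g}
      ∪ {m | ∃ (i : ℤ) (t : M), n₀ < i ∧ t ∈ Submodule.span k (GsetST7 𝒜 ℳ z σf n₀ n) ∧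
          t ∈ ℳ.gr i ∧ ℳ.d t = 0 ∧ m = σf i t}

lemma GsetST7_zero (𝒜 : ConnCDGA k A) (ℳ : DGMod 𝒜 M) (z : M) (σf : ℤ → M → M) (n₀ : ℤ) :
    GsetST7 𝒜 ℳ z σf n₀ 0 = {z} := rfl

lemma mem_GsetST7_smul {ℳ : DGMod 𝒜 M} {z : M} {σf : ℤ → M → M} {n₀ : ℤ} {n : ℕ}
    {j : ℤ} {a : A} {g : M} (ha : a ∈ 𝒜.gr j) (hg : g ∈ GsetST7 𝒜 ℳ z σf n₀ n) :
    ℳ.smul a g ∈ GsetST7 𝒜 ℳ z σf n₀ (n + 1) := by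
  simp only [GsetST7]
  exact Set.mem_union_left _ (Set.mem_union_left _
    (Set.mem_union_right _ ⟨j, a, g, ha, hg, rfl⟩))

lemma mem_GsetST7_d {ℳ : DGMod 𝒜 M} {z : M} {σf : ℤ → M → M} {n₀ : ℤ} {n : ℕ}
    {g : M} (hg : g ∈ GsetST7 𝒜 ℳ z σf n₀ n) :
    ℳ.d g ∈ GsetST7 𝒜 ℳ z σf n₀ (n + 1) := by
  simp only [GsetST7]
  exact Set.mem_union_left _ (Set.mem_union_right _ ⟨g, hg, rfl⟩)

lemma mem_GsetST7_sigma {ℳ : DGMod 𝒜 M} {z : M} {σf : ℤ → M → M} {n₀ : ℤ} {n : ℕ}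
    {i : ℤ} {t : M} (hi : n₀ < i) (ht : t ∈ Submodule.span k (GsetST7 𝒜 ℳ z σf n₀ n))
    (hti : t ∈ ℳ.gr i) (hdt : ℳ.d t = 0) :
    σf i t ∈ GsetST7 𝒜 ℳ z σf n₀ (n + 1) := by
  simp only [GsetST7]
  exact Set.mem_union_right _ ⟨i, t, hi, ht, hti, hdt, rfl⟩

lemma GsetST7_succ_cases {ℳ : DGMod 𝒜 M} {z : M} {σf : ℤ → M → M} {n₀ : ℤ} {n : ℕ}
    {m : M} (h : m ∈ GsetST7 𝒜 ℳ z σf n₀ (n + 1)) :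
    m ∈ GsetST7 𝒜 ℳ z σf n₀ n ∨
    (∃ (j : ℤ) (a : A) (g : M), a ∈ 𝒜.gr j ∧ g ∈ GsetST7 𝒜 ℳ z σf n₀ n ∧ m = ℳ.smul a g) ∨
    (∃ g ∈ GsetST7 𝒜 ℳ z σf n₀ n, m = ℳ.d g) ∨
    (∃ (i : ℤ) (t : M), n₀ < i ∧ t ∈ Submodule.span k (GsetST7 𝒜 ℳ z σf n₀ n) ∧
        t ∈ ℳ.gr i ∧ ℳ.d t = 0 ∧ m = σf i t) := by
  simp only [GsetST7] at h
  rcases h with ((h | h) | h) | h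
  exacts [Or.inl h, Or.inr (Or.inl h), Or.inr (Or.inr (Or.inl h)),
    Or.inr (Or.inr (Or.inr h))]

lemma GsetST7_mono (𝒜 : ConnCDGA k A) (ℳ : DGMod 𝒜 M) (z : M) (σf : ℤ → M → M) (n₀ : ℤ) :
    Monotone (fun n => GsetST7 𝒜 ℳ z σf n₀ n) := by
  apply monotone_nat_of_le_succ
  intro n
  exact fun m hm => Or.inl (Or.inl (Or.inl hm))

end AuxST7


/-- Let `M` be a left DG `A`-module with `dim_k H(M) = 1`, concentrated
in cohomological degree `n₀` (witnessed by a cocycle `z` of degree `n₀` which is not a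
boundary, such that every homogeneous cocycle is, modulo boundaries, a scalar multiple of
`z` in degree `n₀` and zero otherwise). Then there is a DG `A`-submodule `T ⊆ M` (a graded
`k`-subspace closed under the `A`-action, the differential and homogeneous components)
such that the inclusion `T ↪ M` is a quasi-isomorphism and there is a surjective
quasi-isomorphism of DG `A`-modules `π : T → k_{n₀}` onto the trivial DG module `k`
concentrated in degree `n₀`. -/
theorem one_dimensional_cohomology_quasi_iso_to_shifted_trivial
    {k : Type u} [Field k] {A : Type v} [Ring A] [Algebra k A]
    (𝒜 : ConnCDGA k A) {M : Type w} [AddCommGroup M] [Module k M]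
    (ℳ : DGMod 𝒜 M) (n₀ : ℤ) (z : M)
    (hz : z ∈ ℳ.gr n₀) (hzc : ℳ.d z = 0)
    (hznb : ¬ ∃ w ∈ ℳ.gr (n₀ - 1), ℳ.d w = z)
    (hdim : ∀ (i : ℤ) (m : M), m ∈ ℳ.gr i → ℳ.d m = 0 →
      ∃ c : k, ∃ w ∈ ℳ.gr (i - 1), m = c • (if i = n₀ then z else 0) + ℳ.d w) :
    ∃ T : Submodule k M,
      -- `T` is a DG `A`-submodule of `M`
      (∀ (a : A) (t : M), t ∈ T → ℳ.smul a t ∈ T) ∧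
      (∀ t ∈ T, ℳ.d t ∈ T) ∧
      (∀ t ∈ T, ∀ i : ℤ, ((ℳ.decomp.decompose' t) i : M) ∈ T) ∧
      -- the inclusion `T ↪ M` is a quasi-isomorphism:
      -- surjective on cohomology
      (∀ (i : ℤ) (m : M), m ∈ ℳ.gr i → ℳ.d m = 0 →
        ∃ t ∈ T, t ∈ ℳ.gr i ∧ ℳ.d t = 0 ∧ ∃ w : M, m - t = ℳ.d w) ∧
      -- injective on cohomology
      (∀ (i : ℤ) (t : M), t ∈ T → t ∈ ℳ.gr i → ℳ.d t = 0 →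
        (∃ w : M, ℳ.d w = t) → ∃ w ∈ T, ℳ.d w = t) ∧
      -- a surjective quasi-isomorphism of DG `A`-modules `π : T → k_{n₀}`
      ∃ π : M → k,
        (∀ s t : M, s ∈ T → t ∈ T → π (s + t) = π s + π t) ∧
        (∀ (c : k) (t : M), t ∈ T → π (c • t) = c * π t) ∧
        -- degree 0 : `π` kills homogeneous elements of degree `≠ n₀`
        (∀ (i : ℤ) (t : M), t ∈ T → t ∈ ℳ.gr i → i ≠ n₀ → π t = 0) ∧
        -- `A`-linearity into the trivial module (`A^{≥1}` acts as zero on `k_{n₀}`)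
        (∀ (j : ℤ) (a : A), 1 ≤ j → a ∈ 𝒜.gr j → ∀ t ∈ T, π (ℳ.smul a t) = 0) ∧
        -- chain map into the module with zero differential
        (∀ t ∈ T, π (ℳ.d t) = 0) ∧
        -- surjectivity and quasi-isomorphism onto `k_{n₀}`
        (∃ t ∈ T, t ∈ ℳ.gr n₀ ∧ ℳ.d t = 0 ∧ π t = 1) ∧
        (∀ (i : ℤ), i ≠ n₀ → ∀ t ∈ T, t ∈ ℳ.gr i → ℳ.d t = 0 →
          ∃ w ∈ T, w ∈ ℳ.gr (i - 1) ∧ ℳ.d w = t) ∧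
        (∀ t ∈ T, t ∈ ℳ.gr n₀ → ℳ.d t = 0 → π t = 0 → ∃ w ∈ T, ℳ.d w = t) := by
  classical
  -- a linear section of the differential on its range
  obtain ⟨s, hs⟩ := ℳ.d.rangeRestrict.exists_rightInverse_of_surjective
    ℳ.d.range_rangeRestrict
  have hds : ∀ b : LinearMap.range ℳ.d, ℳ.d (s b) = (b : M) := by
    intro b
    have h1 := congrArg Subtype.val (LinearMap.congr_fun hs b)
    simpa using h1
  -- the subspace `U` killed by the functional `p`
  set U : Submodule k M :=
    (⨆ (i : ℤ) (_ : i ≠ n₀), ℳ.gr i) ⊔ (ℳ.gr (n₀ - 1)).map ℳ.d with hUdef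
  have hUgr : ∀ i : ℤ, i ≠ n₀ → ℳ.gr i ≤ U := fun i hi =>
    le_trans (le_iSup₂ (f := fun (i : ℤ) (_ : i ≠ n₀) => ℳ.gr i) i hi) le_sup_left
  have hUd : (ℳ.gr (n₀ - 1)).map ℳ.d ≤ U := le_sup_right
  have hsupker : (⨆ (i : ℤ) (_ : i ≠ n₀), ℳ.gr i) ≤ LinearMap.ker (ℳ.proj n₀) := by
    refine iSup₂_le fun i hi x hx => ?_
    exact LinearMap.mem_ker.mpr (by rw [ℳ.proj_of_mem hx, if_neg (Ne.symm hi)])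
  have hzU : z ∉ U := by
    intro hmem
    rw [hUdef, Submodule.mem_sup] at hmem
    obtain ⟨u, hu, v, hv, huv⟩ := hmem
    obtain ⟨w, hw, rfl⟩ := hv
    refine hznb ⟨w, hw, ?_⟩
    have h1 : ℳ.proj n₀ z = z := by rw [ℳ.proj_of_mem hz, if_pos rfl]
    have h2 : ℳ.proj n₀ u = 0 := hsupker hu
    have h3 : ℳ.proj n₀ (ℳ.d w) = ℳ.d w := by
      rw [ℳ.proj_d, ℳ.proj_of_mem hw, if_pos rfl]
    have h4 := congrArg (ℳ.proj n₀) huv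
    rwa [map_add, h1, h2, h3, zero_add] at h4
  -- the functional `p`
  have hzQ : (Submodule.Quotient.mk z : M ⧸ U) ≠ 0 := by
    simpa [Submodule.Quotient.mk_eq_zero] using hzU
  obtain ⟨φ, hφ⟩ :=
    (LinearMap.toSpanSingleton k (M ⧸ U)
      (Submodule.Quotient.mk z)).exists_leftInverse_of_injective
      (LinearMap.ker_toSpanSingleton k hzQ)
  set p : M →ₗ[k] k := φ ∘ₗ U.mkQ with hpdef
  have hpz : p z = 1 := by
    have h1 := LinearMap.congr_fun hφ 1
    simpa [hpdef, LinearMap.toSpanSingleton_apply_one] using h1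
  have hpU : ∀ u ∈ U, p u = 0 := by
    intro u hu
    have h1 : U.mkQ u = 0 := (Submodule.Quotient.mk_eq_zero U).mpr hu
    rw [hpdef, LinearMap.comp_apply, h1, map_zero]
  have hpd : ∀ w : M, p (ℳ.d w) = 0 := by
    intro w
    have h1 := ℳ.ext_homog (F := p ∘ₗ ℳ.d) (G := 0) (fun j x hx => by
      simp only [LinearMap.comp_apply, LinearMap.zero_apply]
      by_cases hj : j + 1 = n₀
      · have hx' : x ∈ ℳ.gr (n₀ - 1) := by rw [show n₀ - 1 = j by omega]; exact hx
        exact hpU _ (hUd (Submodule.mem_map_of_mem hx'))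
      · exact hpU _ (hUgr _ hj (ℳ.d_mem hx))) w
    simpa using h1
  -- the subspace `W` of chosen antiderivative-images in degree `n₀`
  set τ : (LinearMap.range ℳ.d) →ₗ[k] M := (ℳ.proj n₀) ∘ₗ s with hτdef
  set W : Submodule k M :=
    Submodule.map τ ((ℳ.gr (n₀ + 1)).comap (LinearMap.range ℳ.d).subtype) with hWdef
  have hτd : ∀ b : LinearMap.range ℳ.d, (b : M) ∈ ℳ.gr (n₀ + 1) → ℳ.d (τ b) = (b : M) := by
    intro b hb
    have h2 := ℳ.proj_d (n₀ + 1) (s b)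
    rw [show n₀ + 1 - 1 = n₀ by omega] at h2
    rw [hτdef, LinearMap.comp_apply, ← h2, hds, ℳ.proj_of_mem hb, if_pos rfl]
  have hW : ∀ w ∈ W, ℳ.d w = 0 → w = 0 := by
    intro w hw hdw
    obtain ⟨b, hb, rfl⟩ := hw
    have hb' : (b : M) ∈ ℳ.gr (n₀ + 1) := hb
    have h1 := hτd b hb'
    rw [hdw] at h1
    have hb0 : b = 0 := Subtype.ext h1.symm
    rw [hb0, map_zero]
  -- the chosen antiderivative function
  set σf : ℤ → M → M := fun i t =>
    if h : t ∈ LinearMap.range ℳ.d then ℳ.proj (i - 1) (s ⟨t, h⟩) else 0 with hσdef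
  have hσ : ∀ (i : ℤ) (t : M), n₀ < i → t ∈ ℳ.gr i → ℳ.d t = 0 →
      σf i t ∈ ℳ.gr (i - 1) ∧ ℳ.d (σf i t) = t ∧ (i = n₀ + 1 → σf i t ∈ W) := by
    intro i t hi hti hdt
    have htr : t ∈ LinearMap.range ℳ.d := by
      obtain ⟨c, w, hw, heq⟩ := hdim i t hti hdt
      rw [if_neg (by omega), smul_zero, zero_add] at heq
      exact LinearMap.mem_range.mpr ⟨w, heq.symm⟩
    have hσt : σf i t = ℳ.proj (i - 1) (s ⟨t, htr⟩) := by
      rw [hσdef]; exact dif_pos htr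
    refine ⟨by rw [hσt]; exact ℳ.proj_mem _ _, ?_, ?_⟩
    · have h2 := ℳ.proj_d i (s ⟨t, htr⟩)
      have hb : ((⟨t, htr⟩ : LinearMap.range ℳ.d) : M) = t := rfl
      rw [hσt, ← h2, hds, hb, ℳ.proj_of_mem hti, if_pos rfl]
    · intro hi1
      subst hi1
      rw [hσt, show n₀ + 1 - 1 = n₀ by omega]
      exact Submodule.mem_map.mpr ⟨⟨t, htr⟩, hti, rfl⟩
  -- the DG submodule `T`
  set T : Submodule k M := Submodule.span k (⋃ n, GsetST7 𝒜 ℳ z σf n₀ n) with hTdef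
  have hGsub : ∀ (n : ℕ) {g : M}, g ∈ GsetST7 𝒜 ℳ z σf n₀ n → g ∈ T := by
    intro n g hg
    exact Submodule.subset_span (Set.mem_iUnion.mpr ⟨n, hg⟩)
  have hmemT : ∀ t ∈ T, ∃ n, t ∈ Submodule.span k (GsetST7 𝒜 ℳ z σf n₀ n) := by
    intro t ht
    rw [hTdef, Submodule.span_iUnion] at ht
    have hmono : Monotone fun n => Submodule.span k (GsetST7 𝒜 ℳ z σf n₀ n) :=
      fun a b hab => Submodule.span_mono (GsetST7_mono 𝒜 ℳ z σf n₀ hab)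
    exact (Submodule.mem_iSup_of_directed _ hmono.directed_le).mp ht
  have hzT : z ∈ T := hGsub 0 rfl
  -- every generator is homogeneous of degree `≥ n₀`
  have hG1 : ∀ n, ∀ g ∈ GsetST7 𝒜 ℳ z σf n₀ n, ∃ i, n₀ ≤ i ∧ g ∈ ℳ.gr i := by
    intro n
    induction n with
    | zero =>
      intro g hg
      rw [GsetST7_zero, Set.mem_singleton_iff] at hg
      rw [hg]
      exact ⟨n₀, le_refl _, hz⟩
    | succ n ih =>
      intro g hg
      rcases GsetST7_succ_cases hg with hg | ⟨j, a, g', ha, hg', rfl⟩ | ⟨g', hg', rfl⟩ |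
        ⟨i, t, hi, htsp, hti, hdt, rfl⟩
      · exact ih g hg
      · obtain ⟨i, hi, hgi⟩ := ih g' hg'
        by_cases hj : 0 ≤ j
        · exact ⟨j + i, by omega, ℳ.smul_mem ha hgi⟩
        · have ha0 : a = 0 := by
            have hbot := 𝒜.connected j (by omega)
            rw [hbot] at ha
            simpa using ha
          rw [ha0, ℳ.zero_smul']
          exact ⟨n₀, le_refl _, Submodule.zero_mem _⟩
      · obtain ⟨i, hi, hgi⟩ := ih g' hg'
        exact ⟨i + 1, by omega, ℳ.d_mem hgi⟩
      · exact ⟨i - 1, by omega, (hσ i t hi hti hdt).1⟩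
  -- closure properties of `T`
  have hTsmul : ∀ (a : A) (t : M), t ∈ T → ℳ.smul a t ∈ T := by
    intro a t ht
    rw [hTdef] at ht
    induction ht using Submodule.span_induction with
    | mem x hx =>
      rw [Set.mem_iUnion] at hx
      obtain ⟨n, hn⟩ := hx
      exact 𝒜.mem_of_homog (F := ℳ.smR x)
        (fun j b hb => hGsub (n + 1) (mem_GsetST7_smul hb hn)) a
    | zero => rw [ℳ.smul_zero']; exact T.zero_mem
    | add x y hx hy ihx ihy => rw [ℳ.smul_add]; exact T.add_mem ihx ihy
    | smul c x hx ih => rw [ℳ.ksmul_right]; exact T.smul_mem c ih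
  have hTd : ∀ t ∈ T, ℳ.d t ∈ T := by
    intro t ht
    rw [hTdef] at ht
    induction ht using Submodule.span_induction with
    | mem x hx =>
      rw [Set.mem_iUnion] at hx
      obtain ⟨n, hn⟩ := hx
      exact hGsub (n + 1) (mem_GsetST7_d hn)
    | zero => rw [map_zero]; exact T.zero_mem
    | add x y hx hy ihx ihy => rw [map_add]; exact T.add_mem ihx ihy
    | smul c x hx ih => rw [map_smul]; exact T.smul_mem c ih
  have hTproj : ∀ t ∈ T, ∀ i, ℳ.proj i t ∈ T := by
    intro t ht i
    rw [hTdef] at ht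
    induction ht using Submodule.span_induction with
    | mem x hx =>
      rw [Set.mem_iUnion] at hx
      obtain ⟨n, hn⟩ := hx
      obtain ⟨i₀, _, hx₀⟩ := hG1 n x hn
      rw [ℳ.proj_of_mem hx₀]
      split_ifs
      · exact hGsub n hn
      · exact T.zero_mem
    | zero => rw [map_zero]; exact T.zero_mem
    | add x y hx hy ihx ihy => rw [map_add]; exact T.add_mem ihx ihy
    | smul c x hx ih => rw [map_smul]; exact T.smul_mem c ih
  -- `T` lives in degrees `≥ n₀`
  have hT1 : ∀ t ∈ T, ∀ i, i < n₀ → ℳ.proj i t = 0 := by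
    intro t ht i hi
    rw [hTdef] at ht
    induction ht using Submodule.span_induction with
    | mem x hx =>
      rw [Set.mem_iUnion] at hx
      obtain ⟨n, hn⟩ := hx
      obtain ⟨i₀, hi₀, hx₀⟩ := hG1 n x hn
      rw [ℳ.proj_of_mem hx₀, if_neg (by omega)]
    | zero => exact map_zero _
    | add x y hx hy ihx ihy => rw [map_add, ihx, ihy, add_zero]
    | smul c x hx ih => rw [map_smul, ih, smul_zero]
  have hT1' : ∀ t ∈ T, ∀ i, i < n₀ → t ∈ ℳ.gr i → t = 0 := by
    intro t ht i hi hti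
    have h1 := hT1 t ht i hi
    rwa [ℳ.proj_of_mem hti, if_pos rfl] at h1
  -- the degree-`n₀` part of `T` lies in `k·z ⊔ W`
  set V : Submodule k M := (Submodule.span k {z}) ⊔ W with hVdef
  have hG2 : ∀ n, ∀ g ∈ GsetST7 𝒜 ℳ z σf n₀ n, ℳ.proj n₀ g ∈ V := by
    intro n
    induction n with
    | zero =>
      intro g hg
      rw [GsetST7_zero, Set.mem_singleton_iff] at hg
      rw [hg, ℳ.proj_of_mem hz, if_pos rfl]
      exact Submodule.mem_sup_left (Submodule.mem_span_singleton_self z)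
    | succ n ih =>
      intro g hg
      rcases GsetST7_succ_cases hg with hg | ⟨j, a, g', ha, hg', rfl⟩ | ⟨g', hg', rfl⟩ |
        ⟨i, t, hi, htsp, hti, hdt, rfl⟩
      · exact ih g hg
      · obtain ⟨i₀, hi₀, hg₀⟩ := hG1 n g' hg'
        rcases lt_trichotomy j 0 with hj | hj | hj
        · have ha0 : a = 0 := by
            have hbot := 𝒜.connected j hj
            rw [hbot] at ha
            simpa using ha
          rw [ha0, ℳ.zero_smul', map_zero]
          exact V.zero_mem
        · subst hj
          obtain ⟨c, rfl⟩ := 𝒜.deg_zero_eq ha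
          rw [ℳ.ksmul_left, ℳ.one_smul, map_smul]
          exact V.smul_mem c (ih g' hg')
        · rw [ℳ.proj_smul ha, ℳ.proj_of_mem hg₀, if_neg (by omega), ℳ.smul_zero']
          exact V.zero_mem
      · obtain ⟨i₀, hi₀, hg₀⟩ := hG1 n g' hg'
        rw [ℳ.proj_d, ℳ.proj_of_mem hg₀, if_neg (by omega), map_zero]
        exact V.zero_mem
      · obtain ⟨hmem, hd, hW1⟩ := hσ i t hi hti hdt
        by_cases hi1 : i = n₀ + 1
        · rw [ℳ.proj_of_mem hmem, if_pos (by omega)]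
          exact Submodule.mem_sup_right (hW1 hi1)
        · rw [ℳ.proj_of_mem hmem, if_neg (by omega)]
          exact V.zero_mem
  have hT2 : ∀ t ∈ T, ℳ.proj n₀ t ∈ V := by
    intro t ht
    rw [hTdef] at ht
    induction ht using Submodule.span_induction with
    | mem x hx =>
      rw [Set.mem_iUnion] at hx
      obtain ⟨n, hn⟩ := hx
      exact hG2 n x hn
    | zero => rw [map_zero]; exact V.zero_mem
    | add x y hx hy ihx ihy => rw [map_add]; exact V.add_mem ihx ihy
    | smul c x hx ih => rw [map_smul]; exact V.smul_mem c ih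
  -- cocycles of `T` in degree `n₀` killed by `p` vanish
  have hTn₀ : ∀ t ∈ T, t ∈ ℳ.gr n₀ → ℳ.d t = 0 → p t = 0 → t = 0 := by
    intro t ht htn hdt hpt
    have h2 : ℳ.proj n₀ t ∈ V := hT2 t ht
    rw [ℳ.proj_of_mem htn, if_pos rfl] at h2
    rw [hVdef, Submodule.mem_sup] at h2
    obtain ⟨v, hv, w, hw, hvw⟩ := h2
    rw [Submodule.mem_span_singleton] at hv
    obtain ⟨c, rfl⟩ := hv
    have hdw : ℳ.d w = 0 := by
      have h3 := congrArg ℳ.d hvw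
      rwa [map_add, map_smul, hzc, smul_zero, zero_add, hdt] at h3
    rw [hW w hw hdw, add_zero] at hvw
    have hc : c = 0 := by
      have h3 : p (c • z) = c := by rw [map_smul, hpz, smul_eq_mul, mul_one]
      rw [hvw, hpt] at h3
      exact h3.symm
    rw [← hvw, hc, zero_smul]
  -- cocycles of `T` in degrees `> n₀` bound in `T`
  have hTanti : ∀ i, n₀ < i → ∀ t ∈ T, t ∈ ℳ.gr i → ℳ.d t = 0 →
      ∃ w ∈ T, w ∈ ℳ.gr (i - 1) ∧ ℳ.d w = t := by
    intro i hi t ht hti hdt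
    obtain ⟨n, hn⟩ := hmemT t ht
    obtain ⟨h1, h2, _⟩ := hσ i t hi hti hdt
    exact ⟨σf i t, hGsub (n + 1) (mem_GsetST7_sigma hi hn hti hdt), h1, h2⟩
  -- `p` kills the positive-degree action on `T`
  have hppos : ∀ (j : ℤ) (a : A), 1 ≤ j → a ∈ 𝒜.gr j → ∀ t ∈ T, p (ℳ.smul a t) = 0 := by
    intro j a hj ha t ht
    obtain ⟨s', hs'⟩ := ℳ.sum_proj t
    have h1 : ℳ.smul a t = ∑ l ∈ s', ℳ.smul a (ℳ.proj l t) := by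
      conv_lhs => rw [← hs']
      exact map_sum (ℳ.smL a) _ _
    rw [h1, map_sum]
    apply Finset.sum_eq_zero
    intro l _
    rcases lt_or_ge l n₀ with hl | hl
    · rw [hT1 t ht l hl, ℳ.smul_zero', map_zero]
    · exact hpU _ (hUgr (j + l) (by omega) (ℳ.smul_mem ha (ℳ.proj_mem l t)))
  -- assemble the conclusion
  refine ⟨T, hTsmul, hTd, ?_, ?_, ?_, fun m => p m, fun s t _ _ => map_add p s t,
    fun c t _ => by show p (c • t) = c * p t; rw [map_smul, smul_eq_mul],
    fun i t _ hti hi => hpU t (hUgr i hi hti),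
    hppos, fun t _ => hpd t, ⟨z, hzT, hz, hzc, hpz⟩, ?_, ?_⟩
  · intro t ht i
    rw [ℳ.decompose'_eq_proj]
    exact hTproj t ht i
  · -- surjective on cohomology
    intro i m hmi hdm
    obtain ⟨c, w, hw, heq⟩ := hdim i m hmi hdm
    by_cases hi : i = n₀
    · rw [if_pos hi] at heq
      refine ⟨c • z, T.smul_mem c hzT, by rw [hi]; exact (ℳ.gr n₀).smul_mem c hz,
        by rw [map_smul, hzc, smul_zero], ⟨w, by rw [heq]; abel⟩⟩
    · rw [if_neg hi, smul_zero, zero_add] at heq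
      exact ⟨0, T.zero_mem, Submodule.zero_mem _, map_zero _, ⟨w, by rw [heq, sub_zero]⟩⟩
  · -- injective on cohomology
    intro i t ht hti hdt hbd
    rcases lt_trichotomy i n₀ with hi | hi | hi
    · have ht0 : t = 0 := hT1' t ht i hi hti
      exact ⟨0, T.zero_mem, by rw [map_zero, ht0]⟩
    · obtain ⟨w, hw⟩ := hbd
      have hpt : p t = 0 := by rw [← hw]; exact hpd w
      have ht0 := hTn₀ t ht (hi ▸ hti) hdt hpt
      exact ⟨0, T.zero_mem, by rw [map_zero, ht0]⟩
    · obtain ⟨w, hwT, _, hdw⟩ := hTanti i hi t ht hti hdt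
      exact ⟨w, hwT, hdw⟩
  · -- antiderivatives in `T` for degrees `≠ n₀`
    intro i hi t ht hti hdt
    rcases lt_or_gt_of_ne hi with hlt | hgt
    · have ht0 : t = 0 := hT1' t ht i hlt hti
      exact ⟨0, T.zero_mem, Submodule.zero_mem _, by rw [map_zero, ht0]⟩
    · exact hTanti i hgt t ht hti hdt
  · -- cocycles in degree `n₀` killed by `π` bound in `T`
    intro t ht htn hdt hpt
    have ht0 := hTn₀ t ht htn hdt hpt
    exact ⟨0, T.zero_mem, by rw [map_zero, ht0]⟩
end

section
/- Let A be a connected cochain DG algebra over a field k and let N be a DG A-bimodule such that N is isomorphic to A as a left DG A-module and N is isomorphic to A as a right DG A-module. Then there exists a DG algebra automorphism φ of A such that N is isomorphic to A(φ) as a DG A-bimodule, where A(φ) equals A as a left DG A-module with right action x·a = x φ(a). -/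
/-!
Common infrastructure: connected cochain DG algebras over a field `k`,
(left/right/bi-) DG modules, Hom-complexes, torsion functors, etc.
-/

universe u v w

open DirectSum TensorProduct

variable {k : Type u} [Field k] {A : Type v} [Ring A] [Algebra k A]
variable {B : Type v} [Ring B] [Algebra k B]

/-- Let `N` be a DG `A`-bimodule which is isomorphic to `A` as a left DG
`A`-module (via `F`) and isomorphic to `A` as a right DG `A`-module (via `G`). Then there
exists a DG algebra automorphism `φ` of `A` such that `N ≅ A(φ)` as DG `A`-bimodules,
where `A(φ)` is `A` as a left DG module with right action `x·a = x φ(a)`; i.e. there is a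
bijection `H : A → N` which is additive, `k`-linear, graded, a chain map, left `A`-linear,
and satisfies `H(x φ(a)) = H(x)·a`. -/
theorem bimodule_free_both_sides_is_twist
    {k : Type u} [Field k] {A : Type v} [Ring A] [Algebra k A]
    (𝒜 : ConnCDGA k A) {N : Type w} [AddCommGroup N] [Module k N]
    (𝒩 : DGBimod 𝒜 N)
    (F : A → N) (hFbij : Function.Bijective F)
    (hFadd : ∀ x y : A, F (x + y) = F x + F y)
    (hFk : ∀ (c : k) (x : A), F (c • x) = c • F x)
    (hFgr : ∀ (i : ℤ) (x : A), x ∈ 𝒜.gr i ↔ F x ∈ 𝒩.gr i)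
    (hFd : ∀ x : A, F (𝒜.d x) = 𝒩.d (F x))
    (hFsmul : ∀ a x : A, F (a * x) = 𝒩.smul a (F x))
    (G : A → N) (hGbij : Function.Bijective G)
    (hGadd : ∀ x y : A, G (x + y) = G x + G y)
    (hGk : ∀ (c : k) (x : A), G (c • x) = c • G x)
    (hGgr : ∀ (i : ℤ) (x : A), x ∈ 𝒜.gr i ↔ G x ∈ 𝒩.gr i)
    (hGd : ∀ x : A, G (𝒜.d x) = 𝒩.d (G x))
    (hGrsmul : ∀ x a : A, G (x * a) = 𝒩.rsmul (G x) a) :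
    ∃ φ : A → A, IsDGAut 𝒜 φ ∧
      ∃ H : A → N, Function.Bijective H ∧
        (∀ x y : A, H (x + y) = H x + H y) ∧
        (∀ (c : k) (x : A), H (c • x) = c • H x) ∧
        (∀ (i : ℤ) (x : A), x ∈ 𝒜.gr i ↔ H x ∈ 𝒩.gr i) ∧
        (∀ x : A, H (𝒜.d x) = 𝒩.d (H x)) ∧
        (∀ a x : A, H (a * x) = 𝒩.smul a (H x)) ∧
        (∀ x a : A, H (x * φ a) = 𝒩.rsmul (H x) a) := by
    classical
  set Fe := Equiv.ofBijective F hFbij with hFe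
  set Ge := Equiv.ofBijective G hGbij with hGe
  -- basic facts
  have hF0 : F 0 = 0 := by
    have h := hFadd 0 0
    rw [add_zero] at h
    nth_rewrite 1 [← add_zero (F 0)] at h
    exact (add_left_cancel h).symm
  have hG0 : G 0 = 0 := by
    have h := hGadd 0 0
    rw [add_zero] at h
    nth_rewrite 1 [← add_zero (G 0)] at h
    exact (add_left_cancel h).symm
  have hr0l : ∀ a : A, 𝒩.rsmul 0 a = 0 := by
    intro a
    have h := 𝒩.rsmul_add a 0 0
    rw [add_zero] at h
    nth_rewrite 1 [← add_zero (𝒩.rsmul 0 a)] at h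
    exact (add_left_cancel h).symm
  have hr0r : ∀ m : N, 𝒩.rsmul m 0 = 0 := by
    intro m
    have h := 𝒩.add_rsmul 0 0 m
    rw [add_zero] at h
    nth_rewrite 1 [← add_zero (𝒩.rsmul m 0)] at h
    exact (add_left_cancel h).symm
  have hd1 : 𝒜.d 1 = 0 := by
    have h := 𝒜.leibniz 𝒜.one_mem 𝒜.one_mem
    rw [one_mul, mul_one, one_mul, zpow_zero, one_smul] at h
    exact (left_eq_add.mp h)
  have hF1gr : F 1 ∈ 𝒩.gr 0 := (hFgr 0 1).mp 𝒜.one_mem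
  set φ : A → A := fun a => Fe.symm (𝒩.rsmul (F 1) a) with hφ
  have hFφ : ∀ a : A, F (φ a) = 𝒩.rsmul (F 1) a := by
    intro a
    exact Fe.apply_symm_apply _
  set c : A := Ge.symm (F 1) with hc
  have hGc : G c = F 1 := Ge.apply_symm_apply _
  have hcgr : c ∈ 𝒜.gr 0 := (hGgr 0 c).mpr (by rw [hGc]; exact hF1gr)
  obtain ⟨t, ht⟩ : ∃ t : k, t • (1 : A) = c := by
    rw [𝒜.deg_zero] at hcgr
    exact Submodule.mem_span_singleton.mp hcgr
  have hca : ∀ a : A, c * a = t • a := by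
    intro a
    rw [← ht, smul_mul_assoc, one_mul]
  have hFφG : ∀ a : A, F (φ a) = G (t • a) := by
    intro a
    rw [hFφ, ← hGc, ← hGrsmul, hca]
  -- bijectivity of φ
  have hφbij : Function.Bijective φ := by
    by_cases htz : t = 0
    · have hc0 : c = 0 := by rw [← ht, htz, zero_smul]
      have h10 : (1 : A) = 0 := by
        apply hFbij.1
        rw [hF0, ← hGc, hc0, hG0]
      have hall : ∀ a : A, a = 0 := by
        intro a
        rw [← one_mul a, h10, zero_mul]
      constructor
      · intro a b _
        rw [hall a, hall b]
      · intro y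
        exact ⟨0, by rw [hall (φ 0), hall y]⟩
    · constructor
      · intro a b hab
        have h := congrArg F hab
        rw [hFφG, hFφG] at h
        have h2 : t • a = t • b := hGbij.1 h
        exact smul_right_injective A htz h2
      · intro y
        refine ⟨t⁻¹ • Ge.symm (F y), ?_⟩
        apply hFbij.1
        rw [hFφG, smul_smul, mul_inv_cancel₀ htz, one_smul]
        exact Ge.apply_symm_apply _
  have hφadd : ∀ x y : A, φ (x + y) = φ x + φ y := by
    intro x y
    apply hFbij.1
    rw [hFadd, hFφ, hFφ, hFφ, 𝒩.add_rsmul]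
  have hφmul : ∀ x y : A, φ (x * y) = φ x * φ y := by
    intro x y
    apply hFbij.1
    rw [hFφ, hFsmul, hFφ, 𝒩.mul_rsmul, ← 𝒩.smul_rsmul_assoc]
    congr 1
    rw [← hFφ, ← hFsmul, mul_one]
  have hφone : φ 1 = 1 := by
    apply hFbij.1
    rw [hFφ, 𝒩.one_rsmul]
  have hφk : ∀ (s : k) (x : A), φ (s • x) = s • φ x := by
    intro s x
    apply hFbij.1
    rw [hFφ, hFk, hFφ, 𝒩.krsmul_right]
  have hφgr : ∀ {i : ℤ} {x : A}, x ∈ 𝒜.gr i → φ x ∈ 𝒜.gr i := by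
    intro i x hx
    apply (hFgr i (φ x)).mpr
    rw [hFφ]
    have := 𝒩.rsmul_mem hF1gr hx
    rwa [zero_add] at this
  have hdF1 : 𝒩.d (F 1) = 0 := by rw [← hFd, hd1, hF0]
  have hφd : ∀ x : A, φ (𝒜.d x) = 𝒜.d (φ x) := by
    intro x
    apply hFbij.1
    rw [hFφ, hFd, hFφ]
    have h := 𝒩.rleibniz (i := 0) x hF1gr
    rw [hdF1, hr0l, zero_add, zpow_zero, one_smul] at h
    exact h.symm
  refine ⟨φ, ⟨hφbij, hφadd, hφmul, hφone, hφk, fun {i x} hx => hφgr hx, hφd⟩,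
    F, hFbij, hFadd, hFk, hFgr, hFd, hFsmul, ?_⟩
  intro x a
  rw [hFsmul, hFφ, ← 𝒩.smul_rsmul_assoc]
  congr 1
  rw [← hFsmul, mul_one]
end
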